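/- arXiv:0810.3755 — 2 statements merged into one kernel-verified Lean document; each statement's English description precedes it below -/
import Mathlib

section
/- For every B > 0 there is a number C = C(B) > B with the following property. Let γ: [0, ∞) → X be a B-contracting geodesic ray in a proper CAT(0)-space X and let ξ ∈ ∂X − {γ(∞)}. Then every geodesic ζ: ℝ → X connecting ξ = ζ(−∞) to γ(∞) = ζ(∞) passes through the (9B+6)-neighborhood of every point x ∈ π_{γ[0,∞)}(ξ). Moreover, if t ∈ ℝ is such that d(ζ(t), x) ≤ 9B+6 then the geodesic ray ζ[t, ∞) is C-contracting. -/
open Metric Set Filter Topology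
open scoped ENNReal Classical Pointwise

noncomputable section

universe u

/-! ## Proper CAT(0) spaces -/

/-- A geodesic metric space satisfying the CAT(0) comparison inequality
(in the form of the Bruhat–Tits CN-inequality for midpoints). -/
class CAT0Space (X : Type u) [MetricSpace X] : Prop where
  exists_geodesic : ∀ x y : X, ∃ γ : ℝ → X, γ 0 = x ∧ γ (dist x y) = y ∧
    ∀ s ∈ Set.Icc (0 : ℝ) (dist x y), ∀ t ∈ Set.Icc (0 : ℝ) (dist x y),
      dist (γ s) (γ t) = |s - t|
  cn_ineq : ∀ x y z m : X, dist y m = dist y z / 2 → dist z m = dist y z / 2 →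
    dist x m ^ 2 ≤ dist x y ^ 2 / 2 + dist x z ^ 2 / 2 - dist y z ^ 2 / 4

variable {X : Type u} [MetricSpace X]

/-- `γ` restricted to the (closed connected) set `J ⊆ ℝ` is a unit-speed geodesic. -/
def GeodesicOn (γ : ℝ → X) (J : Set ℝ) : Prop :=
  ∀ s ∈ J, ∀ t ∈ J, dist (γ s) (γ t) = |s - t|

/-- The set of points of `A` closest to `x` (the shortest-distance projection of `x` to `A`). -/
def projSet (A : Set X) (x : X) : Set X :=
  {p | p ∈ A ∧ dist x p = Metric.infDist x A}

/-- A geodesic `γ : J → X` is `B`-contracting if the shortest-distance projection to it of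
any closed metric ball disjoint from it has diameter at most `B`. -/
def ContractingOn (B : ℝ) (γ : ℝ → X) (J : Set ℝ) : Prop :=
  GeodesicOn γ J ∧ ∀ (z : X) (r : ℝ),
    Disjoint (Metric.closedBall z r) (γ '' J) →
    EMetric.diam (⋃ x ∈ Metric.closedBall z r, projSet (γ '' J) x) ≤ ENNReal.ofReal B

/-! ## The visual boundary, realized as the horofunction boundary inside `C(X, ℝ)`
(for proper CAT(0)-spaces the two compactifications agree). -/

/-- The embedding `x ↦ (z ↦ d(x,z) - d(x,o))` of `X` into `C(X, ℝ)`. -/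
def bcomp (o : X) (x : X) : C(X, ℝ) :=
  ⟨fun z => dist x z - dist x o, (continuous_const.dist continuous_id).sub continuous_const⟩

/-- The compactification `X ∪ ∂X` of `X`, realized inside `C(X, ℝ)`. -/
def compactifn (o : X) : Set C(X, ℝ) := closure (Set.range (bcomp o))

/-- The visual boundary `∂X` of `X`, realized inside `C(X, ℝ)` as the set of
(normalized) Busemann functions. -/
def bdry (o : X) : Set C(X, ℝ) := closure (Set.range (bcomp o)) \ Set.range (bcomp o)

/-- The natural action of an isometry `g` of `X` on the compactification; on boundary points
it is the induced boundary homeomorphism. -/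
def boundaryAct (o : X) (g : X ≃ᵢ X) (ξ : C(X, ℝ)) : C(X, ℝ) :=
  ⟨fun z => ξ (g.symm z) - ξ (g.symm o),
    (ξ.continuous.comp g.symm.continuous).sub continuous_const⟩

/-- `γ(-∞) = ξ`: the geodesic `γ` emanates from the boundary point `ξ`. -/
def BeginsAt (o : X) (γ : ℝ → X) (ξ : C(X, ℝ)) : Prop :=
  Filter.Tendsto (fun t => bcomp o (γ t)) Filter.atBot (nhds ξ)

/-- `γ(∞) = ξ`: the geodesic (ray) `γ` ends at the boundary point `ξ`. -/
def EndsAt (o : X) (γ : ℝ → X) (ξ : C(X, ℝ)) : Prop :=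
  Filter.Tendsto (fun t => bcomp o (γ t)) Filter.atTop (nhds ξ)

/-- The set of (forward or backward) endpoints at infinity of a geodesic. -/
def endpointsSet (o : X) (γ : ℝ → X) : Set C(X, ℝ) :=
  {ξ | EndsAt o γ ξ ∨ BeginsAt o γ ξ}

/-- Two geodesics share at most one endpoint in `∂X`. -/
def ShareAtMostOneEnd (o : X) (ζ₁ ζ₂ : ℝ → X) : Prop :=
  Set.Subsingleton (endpointsSet o ζ₁ ∩ endpointsSet o ζ₂)

/-- The shortest-distance projection of a boundary point `ξ` to a geodesic `γ : J → X`: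
the set of points of `γ(J)` where the Busemann function of `ξ` restricted to `γ(J)`
attains its minimum. -/
def projSetBdry (γ : ℝ → X) (J : Set ℝ) (ξ : C(X, ℝ)) : Set X :=
  {y | ∃ t ∈ J, y = γ t ∧ ∀ s ∈ J, ξ (γ t) ≤ ξ (γ s)}

/-! ## The isometry group with the compact-open topology -/

instance isometryEquivTopologicalSpace (X : Type u) [MetricSpace X] :
    TopologicalSpace (X ≃ᵢ X) :=
  TopologicalSpace.induced
    (fun g : X ≃ᵢ X =>
      ((⟨⇑g, g.continuous⟩ : C(X, X)), (⟨⇑g.symm, g.symm.continuous⟩ : C(X, X))))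
    inferInstance

/-- The limit set of a subgroup of the isometry group: the set of accumulation points in
`∂X` of an orbit. -/
def limitSet (o : X) (Gs : Subgroup (X ≃ᵢ X)) : Set C(X, ℝ) :=
  bdry o ∩ closure (Set.range fun g : Gs => bcomp o ((g : X ≃ᵢ X) o))

/-- A subgroup of the isometry group is non-elementary if its limit set contains at least
three points and it fixes no point of `∂X`. -/
def IsNonElementary (o : X) (Gs : Subgroup (X ≃ᵢ X)) : Prop :=
  (∃ a ∈ limitSet o Gs, ∃ b ∈ limitSet o Gs, ∃ c ∈ limitSet o Gs, a ≠ b ∧ a ≠ c ∧ b ≠ c) ∧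
  ¬ ∃ ξ ∈ bdry o, ∀ g : Gs, boundaryAct o (g : X ≃ᵢ X) ξ = ξ

/-- A subgroup of the isometry group is elementary if its limit set contains at most two
points or it fixes a point of `∂X`. -/
def IsElementary (o : X) (Gs : Subgroup (X ≃ᵢ X)) : Prop :=
  (∃ a b : C(X, ℝ), limitSet o Gs ⊆ {a, b}) ∨
  ∃ ξ ∈ bdry o, ∀ g : Gs, boundaryAct o (g : X ≃ᵢ X) ξ = ξ

/-- A rank-one isometry: an axial isometry admitting a `B`-contracting axis for some `B > 0`. -/
def IsRankOneIsom (g : X ≃ᵢ X) : Prop :=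
  ∃ (γ : ℝ → X) (τ B : ℝ), 0 < τ ∧ 0 < B ∧ ContractingOn B γ Set.univ ∧
    (∀ t : ℝ, g (γ t) = γ (t + τ)) ∧ ∀ x : X, τ ≤ dist x (g x)

/-- A rank-one isometry together with its attracting fixed point `a` and repelling fixed
point `b` at infinity (the endpoints of a contracting axis). -/
def IsRankOneWithEnds (o : X) (g : X ≃ᵢ X) (a b : C(X, ℝ)) : Prop :=
  ∃ (γ : ℝ → X) (τ B : ℝ), 0 < τ ∧ 0 < B ∧ ContractingOn B γ Set.univ ∧
    (∀ t : ℝ, g (γ t) = γ (t + τ)) ∧ (∀ x : X, τ ≤ dist x (g x)) ∧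
    BeginsAt o γ b ∧ EndsAt o γ a

/-- `G` acts transitively on the complement of the diagonal in `Λ × Λ`. -/
def TransOnPairs (o : X) (Gs : Subgroup (X ≃ᵢ X)) : Prop :=
  ∀ ξ η ξ' η' : C(X, ℝ), ξ ∈ limitSet o Gs → η ∈ limitSet o Gs →
    ξ' ∈ limitSet o Gs → η' ∈ limitSet o Gs → ξ ≠ η → ξ' ≠ η' →
    ∃ g ∈ Gs, boundaryAct o g ξ = ξ' ∧ boundaryAct o g η = η'

/-- The set `𝒜(B)` of ordered pairs of distinct boundary points which are connected by a
`B`-contracting geodesic. -/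
def ABSet (o : X) (B : ℝ) : Set (C(X, ℝ) × C(X, ℝ)) :=
  {p | p.1 ≠ p.2 ∧ ∃ γ : ℝ → X, ContractingOn B γ Set.univ ∧
    BeginsAt o γ p.1 ∧ EndsAt o γ p.2}

/-- The action of an isometry on ordered pairs of boundary points. -/
def pairAct (o : X) (g : X ≃ᵢ X) (p : C(X, ℝ) × C(X, ℝ)) : C(X, ℝ) × C(X, ℝ) :=
  (boundaryAct o g p.1, boundaryAct o g p.2)

/-- The action of an isometry on triples of boundary points. -/
def tripleAct (o : X) (g : X ≃ᵢ X) (t : C(X, ℝ) × C(X, ℝ) × C(X, ℝ)) :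
    C(X, ℝ) × C(X, ℝ) × C(X, ℝ) :=
  (boundaryAct o g t.1, boundaryAct o g t.2.1, boundaryAct o g t.2.2)

/-! ## The quantity `τ_B` -/

/-- The set of parameters where `ζ₁` is `(6B+2)`-close to `ζ₂(J₂)`. -/
def nearSet (B : ℝ) (ζ₁ : ℝ → X) (J₁ : Set ℝ) (ζ₂ : ℝ → X) (J₂ : Set ℝ) : Set ℝ :=
  {t | t ∈ J₁ ∧ Metric.infDist (ζ₁ t) (ζ₂ '' J₂) ≤ 6 * B + 2}

/-- The parameter of the shortest-distance projection of `x` to the geodesic `γ : J → X`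
(the projection point is unique in a CAT(0)-space). -/
def projParam (γ : ℝ → X) (J : Set ℝ) (x : X) : ℝ :=
  sInf {t | t ∈ J ∧ dist x (γ t) = Metric.infDist x (γ '' J)}

/-- The quantity `τ_B(x, ζ₁, ζ₂)` of the paper, measuring the overlap, as seen from the
projections of `x`, of the `(6B+2)`-fellow-travelling portions of the oriented geodesics
`ζ₁ : J₁ → X` and `ζ₂ : J₂ → X`. -/
def tauB (B : ℝ) (x : X) (ζ₁ : ℝ → X) (J₁ : Set ℝ) (ζ₂ : ℝ → X) (J₂ : Set ℝ) : ℝ :=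
  let N₁ := nearSet B ζ₁ J₁ ζ₂ J₂
  let N₂ := nearSet B ζ₂ J₂ ζ₁ J₁
  let p₁ := projParam ζ₁ J₁ x
  let p₂ := projParam ζ₂ J₂ x
  let aE : Set ℝ → EReal := fun N => if BddBelow N then ((sInf N : ℝ) : EReal) else ⊥
  let bE : Set ℝ → EReal := fun N => if BddAbove N then ((sSup N : ℝ) : EReal) else ⊤
  let s₁ : EReal := if BddBelow N₂ then ((projParam ζ₁ J₁ (ζ₂ (sInf N₂)) : ℝ) : EReal) else ⊥
  let t₁ : EReal := if BddAbove N₂ then ((projParam ζ₁ J₁ (ζ₂ (sSup N₂)) : ℝ) : EReal) else ⊤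
  let s₂ : EReal := if BddBelow N₁ then ((projParam ζ₂ J₂ (ζ₁ (sInf N₁)) : ℝ) : EReal) else ⊥
  let t₂ : EReal := if BddAbove N₁ then ((projParam ζ₂ J₂ (ζ₁ (sSup N₁)) : ℝ) : EReal) else ⊤
  let dA₁ : ℝ≥0∞ := if BddBelow N₁ then ENNReal.ofReal (dist (ζ₁ p₁) (ζ₁ (sInf N₁))) else ⊤
  let dB₁ : ℝ≥0∞ := if BddAbove N₁ then ENNReal.ofReal (dist (ζ₁ p₁) (ζ₁ (sSup N₁))) else ⊤
  let dA₂ : ℝ≥0∞ := if BddBelow N₂ then ENNReal.ofReal (dist (ζ₂ p₂) (ζ₂ (sInf N₂))) else ⊤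
  let dB₂ : ℝ≥0∞ := if BddAbove N₂ then ENNReal.ofReal (dist (ζ₂ p₂) (ζ₂ (sSup N₂))) else ⊤
  if N₁.Nonempty ∧ N₂.Nonempty ∧ s₁ < t₁ ∧ s₂ < t₂ ∧
      aE N₁ ≤ (p₁ : EReal) ∧ (p₁ : EReal) ≤ bE N₁ ∧
      aE N₂ ≤ (p₂ : EReal) ∧ (p₂ : EReal) ≤ bE N₂ then
    (min (min dA₁ dB₁) (min dA₂ dB₂)).toReal
  else 0

/-- `τ_B(x, α₁, α₂)` for pairs `α₁, α₂ ∈ 𝒜(B)`: the infimum of `τ_B(x, ζ₁, ζ₂)` over all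
`B`-contracting geodesics `ζᵢ` connecting the two components of `αᵢ`. -/
def tauBPair (o : X) (B : ℝ) (x : X) (α₁ α₂ : C(X, ℝ) × C(X, ℝ)) : ℝ :=
  sInf {r | ∃ ζ₁ ζ₂ : ℝ → X,
    ContractingOn B ζ₁ Set.univ ∧ BeginsAt o ζ₁ α₁.1 ∧ EndsAt o ζ₁ α₁.2 ∧
    ContractingOn B ζ₂ Set.univ ∧ BeginsAt o ζ₂ α₂.1 ∧ EndsAt o ζ₂ α₂.2 ∧
    r = tauB B x ζ₁ Set.univ ζ₂ Set.univ}

/-- The Gromov-product-like kernel `δ̃_x(α₁, α₂) = e^{-χ τ_B(x, α₁, α₂)}` on `𝒜(B)`. -/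
def tildeDelta (o : X) (B χ : ℝ) (x : X) (α β : C(X, ℝ) × C(X, ℝ)) : ℝ :=
  if α = β then 0 else Real.exp (-(χ * tauBPair o B x α β))

/-- The family of distances `{δ_x}` on `𝒜(B)` of Corollary `deltadistance`:
a family of genuine distance functions inducing the subspace topology, invariant under the
involution `ι` and the isometry group, uniformly comparable to `δ̃_x`, and moving
uniformly Lipschitz-continuously (in the multiplicative sense) with the basepoint `x`. -/
def IsDeltaFamily (o : X) (B χ c₀ : ℝ)
    (δ : X → ↥(ABSet o B) → ↥(ABSet o B) → ℝ) : Prop :=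
  (∀ x α β, 0 ≤ δ x α β) ∧
  (∀ x α β, δ x α β = 0 ↔ α = β) ∧
  (∀ x α β, δ x α β = δ x β α) ∧
  (∀ x α β γ', δ x α γ' ≤ δ x α β + δ x β γ') ∧
  (∀ (x : X) (s : Set ↥(ABSet o B)),
      IsOpen s ↔ ∀ a ∈ s, ∃ ε > 0, ∀ b, δ x a b < ε → b ∈ s) ∧
  (∀ (x : X) (a : ↥(ABSet o B)), ∃ ε > 0, IsCompact {b | δ x a b ≤ ε}) ∧
  (∀ (x : X) (α β : ↥(ABSet o B)) (hα : ((α : C(X, ℝ) × C(X, ℝ)).2,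
      (α : C(X, ℝ) × C(X, ℝ)).1) ∈ ABSet o B)
      (hβ : ((β : C(X, ℝ) × C(X, ℝ)).2, (β : C(X, ℝ) × C(X, ℝ)).1) ∈ ABSet o B),
      δ x ⟨((α : C(X, ℝ) × C(X, ℝ)).2, (α : C(X, ℝ) × C(X, ℝ)).1), hα⟩
        ⟨((β : C(X, ℝ) × C(X, ℝ)).2, (β : C(X, ℝ) × C(X, ℝ)).1), hβ⟩ = δ x α β) ∧
  (∀ (x : X) (α β : ↥(ABSet o B)),
      c₀ * tildeDelta o B χ x (↑α) (↑β) ≤ δ x α β ∧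
      δ x α β ≤ tildeDelta o B χ x (↑α) (↑β)) ∧
  (∀ (x y : X) (α β : ↥(ABSet o B)),
      Real.exp (-(χ * dist x y)) * δ x α β ≤ δ y α β ∧
      δ y α β ≤ Real.exp (χ * dist x y) * δ x α β) ∧
  (∀ (g : X ≃ᵢ X) (x : X) (α β : ↥(ABSet o B))
      (hα : pairAct o g (↑α) ∈ ABSet o B) (hβ : pairAct o g (↑β) ∈ ABSet o B),
      δ (g x) ⟨pairAct o g (↑α), hα⟩ ⟨pairAct o g (↑β), hβ⟩ = δ x α β)

/-! ## Amenability, compact extensions, Lie groups -/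

/-- A topological group is amenable if there is a left-invariant mean on the space of
bounded continuous real functions. -/
def IsAmenableGroup (H : Type u) [Group H] [TopologicalSpace H] : Prop :=
  ∃ m : BoundedContinuousFunction H ℝ →ₗ[ℝ] ℝ,
    m 1 = 1 ∧ (∀ f : BoundedContinuousFunction H ℝ, 0 ≤ f → 0 ≤ m f) ∧
    ∀ (g : H) (f f' : BoundedContinuousFunction H ℝ),
      (∀ x, f' x = f (g * x)) → m f' = m f

/-- A realization of a topological group `G` as a compact extension: a compact normal
subgroup `K` together with a topological group isomorphism `G ⧸ K ≃ L`. -/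
structure CompactExtension (G : Type u) [Group G] [TopologicalSpace G] where
  L : Type u
  [grp : Group L]
  [top : TopologicalSpace L]
  K : Subgroup G
  normal : K.Normal
  isCompact : IsCompact (K : Set G)
  e : (G ⧸ K) ≃* L
  continuous_e : Continuous ⇑e
  continuous_symm : Continuous ⇑e.symm

attribute [instance] CompactExtension.grp CompactExtension.top

/-- Gromov hyperbolicity via the four-point condition. -/
def GromovHyperbolicSpace (Y : Type u) [MetricSpace Y] : Prop :=
  ∃ δ : ℝ, 0 ≤ δ ∧ ∀ x y z w : Y,
    dist x y + dist z w ≤ max (dist x z + dist y w) (dist x w + dist y z) + δ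

/-- A witness that `L` is a rank-one simple Lie group: a faithful continuous, proper,
transitive, isometric action on a non-trivial Gromov hyperbolic proper CAT(0)-space
(its rank-one symmetric space). -/
structure RankOneWitness (L : Type u) [Group L] [TopologicalSpace L] where
  Y : Type u
  [ms : MetricSpace Y]
  proper : ProperSpace Y
  cat0 : CAT0Space Y
  hyperbolic : GromovHyperbolicSpace Y
  nontrivial : ∃ y₀ y₁ : Y, y₀ ≠ y₁
  act : L →* (Y ≃ᵢ Y)
  faithful : Function.Injective ⇑act
  continuous_act : Continuous fun p : L × Y => act p.1 p.2
  proper_act : ∀ K : Set Y, IsCompact K →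
    IsCompact (closure {g : L | ¬ Disjoint (⇑(act g) '' K) K})
  transitive : ∀ y y' : Y, ∃ g : L, act g y = y'

attribute [instance] RankOneWitness.ms

/-- A simple Lie group of rank one (with trivial center), characterized geometrically:
a connected, locally compact, non-compact, topologically simple group acting continuously,
faithfully, properly, transitively and isometrically on a non-trivial Gromov hyperbolic
proper CAT(0)-space. -/
def IsRankOneSimpleLie (L : Type u) [Group L] [TopologicalSpace L] : Prop :=
  IsTopologicalGroup L ∧ ConnectedSpace L ∧ LocallyCompactSpace L ∧ ¬ CompactSpace L ∧
  (∀ N : Subgroup L, N.Normal → IsClosed (N : Set L) → N = ⊥ ∨ N = ⊤) ∧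
  Nonempty (RankOneWitness L)

/-- A witness that `G` is a semisimple Lie group of rank at least two: a continuous, proper,
transitive, isometric action on a proper CAT(0)-space (its symmetric space) which contains
a 2-flat. -/
structure HigherRankWitness (G : Type u) [Group G] [TopologicalSpace G] where
  Y : Type u
  [ms : MetricSpace Y]
  proper : ProperSpace Y
  cat0 : CAT0Space Y
  act : G →* (Y ≃ᵢ Y)
  continuous_act : Continuous fun p : G × Y => act p.1 p.2
  proper_act : ∀ K : Set Y, IsCompact K →
    IsCompact (closure {g : G | ¬ Disjoint (⇑(act g) '' K) K})
  transitive : ∀ y y' : Y, ∃ g : G, act g y = y'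
  twoFlat : ∃ f : ℝ × ℝ → Y, ∀ p q : ℝ × ℝ,
    dist (f p) (f q) = Real.sqrt ((p.1 - q.1) ^ 2 + (p.2 - q.2) ^ 2)

attribute [instance] HigherRankWitness.ms

/-- A connected semisimple Lie group with finite center, no compact factors, and real rank
at least two, characterized geometrically: a connected locally compact group with finite
center whose closed normal amenable subgroups are finite, acting continuously, properly,
transitively and isometrically on a proper CAT(0)-space containing a 2-flat. -/
def IsHigherRankSemisimpleLie (G : Type u) [Group G] [TopologicalSpace G] : Prop :=
  IsTopologicalGroup G ∧ ConnectedSpace G ∧ LocallyCompactSpace G ∧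
  Finite (Subgroup.center G) ∧
  (∀ N : Subgroup G, N.Normal → IsClosed (N : Set G) → IsAmenableGroup ↥N → Finite ↥N) ∧
  Nonempty (HigherRankWitness G)

/-- A lattice in a locally compact group: a discrete subgroup of finite covolume. -/
def IsLatticeIn (G : Type u) [Group G] [TopologicalSpace G] (Γ : Subgroup G) : Prop :=
  DiscreteTopology ↥Γ ∧ IsClosed (Γ : Set G) ∧
  ∃ μ : @MeasureTheory.Measure G (borel G),
    @MeasureTheory.Measure.IsHaarMeasure G _ _ (borel G) μ ∧
    ∃ F : Set G, @MeasurableSet G (borel G) F ∧ μ F < ⊤ ∧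
      (⋃ γ ∈ Γ, (fun x => x * γ) '' F) = Set.univ

/-- An irreducible lattice: the projection of `Γ` to the quotient by every proper
(non-discrete) closed normal subgroup is dense. -/
def IsIrreducibleLattice (G : Type u) [Group G] [TopologicalSpace G] (Γ : Subgroup G) : Prop :=
  ∀ N : Subgroup G, N.Normal → IsClosed (N : Set G) → ¬ DiscreteTopology ↥N →
    Dense ((N : Set G) * (Γ : Set G))

/-! ## Bounded cohomology in degree two with coefficients in `L^p(G, μ)` -/

section Cohomology

variable {G : Type u} [Group G] [MeasurableSpace G]

/-- A bounded `G`-equivariant `L^p(G,μ)`-valued 2-cochain (for the homogeneous resolution),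
described by its values: a function `G² → L^p(G, μ)` which is uniformly `L^p`-bounded and
equivariant for the left regular representation. -/
def IsBddEquivariantCochain2 (μ : MeasureTheory.Measure G) (p : ℝ≥0∞)
    (φ : G → G → G → ℝ) : Prop :=
  (∀ g₀ g₁, MeasureTheory.MemLp (φ g₀ g₁) p μ) ∧
  (∃ C : ℝ≥0∞, C ≠ ⊤ ∧ ∀ g₀ g₁, MeasureTheory.eLpNorm (φ g₀ g₁) p μ ≤ C) ∧
  (∀ g g₀ g₁, (fun h => φ (g * g₀) (g * g₁) h) =ᵐ[μ] fun h => φ g₀ g₁ (g⁻¹ * h))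

/-- A bounded `G`-equivariant `L^p(G,μ)`-valued 3-cochain. -/
def IsBddEquivariantCochain3 (μ : MeasureTheory.Measure G) (p : ℝ≥0∞)
    (ω : G → G → G → G → ℝ) : Prop :=
  (∀ g₀ g₁ g₂, MeasureTheory.MemLp (ω g₀ g₁ g₂) p μ) ∧
  (∃ C : ℝ≥0∞, C ≠ ⊤ ∧ ∀ g₀ g₁ g₂, MeasureTheory.eLpNorm (ω g₀ g₁ g₂) p μ ≤ C) ∧
  (∀ g g₀ g₁ g₂, (fun h => ω (g * g₀) (g * g₁) (g * g₂) h) =ᵐ[μ] fun h => ω g₀ g₁ g₂ (g⁻¹ * h))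

/-- The homogeneous 2-cocycle identity. -/
def IsCocycle3 (μ : MeasureTheory.Measure G) (ω : G → G → G → G → ℝ) : Prop :=
  ∀ g₀ g₁ g₂ g₃,
    (fun h => ω g₁ g₂ g₃ h - ω g₀ g₂ g₃ h + ω g₀ g₁ g₃ h - ω g₀ g₁ g₂ h)
      =ᵐ[μ] fun _ => (0 : ℝ)

/-- `ω` is the coboundary of the 2-cochain `φ`. -/
def IsCoboundaryOf (μ : MeasureTheory.Measure G) (ω : G → G → G → G → ℝ)
    (φ : G → G → G → ℝ) : Prop :=
  ∀ g₀ g₁ g₂, ω g₀ g₁ g₂ =ᵐ[μ] fun h => φ g₁ g₂ h - φ g₀ g₂ h + φ g₀ g₁ h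

/-- Non-vanishing of `H²_b(G, L^p(G, μ))` (with `G` regarded as a discrete group):
there is a bounded equivariant cocycle which is not the coboundary of any bounded
equivariant cochain. -/
def H2bNontrivial (μ : MeasureTheory.Measure G) (p : ℝ≥0∞) : Prop :=
  ∃ ω : G → G → G → G → ℝ, IsBddEquivariantCochain3 μ p ω ∧ IsCocycle3 μ ω ∧
    ¬ ∃ φ : G → G → G → ℝ, IsBddEquivariantCochain2 μ p φ ∧ IsCoboundaryOf μ ω φ

/-- Infinite-dimensionality of `H²_b(G, L^p(G, μ))`: a sequence of bounded equivariant
cocycles whose classes are linearly independent. -/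
def H2bInfiniteDimensional (μ : MeasureTheory.Measure G) (p : ℝ≥0∞) : Prop :=
  ∃ ω : ℕ → G → G → G → G → ℝ,
    (∀ n, IsBddEquivariantCochain3 μ p (ω n) ∧ IsCocycle3 μ (ω n)) ∧
    ∀ (s : Finset ℕ) (c : ℕ → ℝ),
      (∃ φ : G → G → G → ℝ, IsBddEquivariantCochain2 μ p φ ∧
        IsCoboundaryOf μ (fun g₀ g₁ g₂ h => ∑ n ∈ s, c n * ω n g₀ g₁ g₂ h) φ) →
      ∀ n ∈ s, c n = 0

variable [TopologicalSpace G]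

/-- Continuity of a 2-cochain as a map `G² → L^p(G, μ)`. -/
def IsLpContinuous2 (μ : MeasureTheory.Measure G) (p : ℝ≥0∞) (φ : G → G → G → ℝ) : Prop :=
  ∀ t₀ : G × G, Filter.Tendsto
    (fun t : G × G => MeasureTheory.eLpNorm (fun h => φ t.1 t.2 h - φ t₀.1 t₀.2 h) p μ)
    (nhds t₀) (nhds 0)

/-- Continuity of a 3-cochain as a map `G³ → L^p(G, μ)`. -/
def IsLpContinuous3 (μ : MeasureTheory.Measure G) (p : ℝ≥0∞) (ω : G → G → G → G → ℝ) : Prop :=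
  ∀ t₀ : G × G × G, Filter.Tendsto
    (fun t : G × G × G =>
      MeasureTheory.eLpNorm (fun h => ω t.1 t.2.1 t.2.2 h - ω t₀.1 t₀.2.1 t₀.2.2 h) p μ)
    (nhds t₀) (nhds 0)

/-- Non-vanishing of the continuous bounded cohomology `H²_cb(G, L^p(G, μ))`. -/
def H2cbNontrivial (μ : MeasureTheory.Measure G) (p : ℝ≥0∞) : Prop :=
  ∃ ω : G → G → G → G → ℝ, IsBddEquivariantCochain3 μ p ω ∧ IsLpContinuous3 μ p ω ∧
    IsCocycle3 μ ω ∧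
    ¬ ∃ φ : G → G → G → ℝ, IsBddEquivariantCochain2 μ p φ ∧ IsLpContinuous2 μ p φ ∧
      IsCoboundaryOf μ ω φ

end Cohomology

/-! ## Triples and the cocycle of Theorem `cocycle` -/

/-- The set `T(B)` of triples of pairwise distinct points of the limit set whose pairs are
connected by `B`-contracting geodesics. -/
def TSet (o : X) (Gs : Subgroup (X ≃ᵢ X)) (B : ℝ) :
    Set (C(X, ℝ) × C(X, ℝ) × C(X, ℝ)) :=
  {t | t.1 ∈ limitSet o Gs ∧ t.2.1 ∈ limitSet o Gs ∧ t.2.2 ∈ limitSet o Gs ∧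
    (t.1, t.2.1) ∈ ABSet o B ∧ (t.2.1, t.2.2) ∈ ABSet o B ∧ (t.2.2, t.1) ∈ ABSet o B}

/-- The set of triples of pairwise distinct points of the limit set. -/
def TripleSet (o : X) (Gs : Subgroup (X ≃ᵢ X)) : Set (C(X, ℝ) × C(X, ℝ) × C(X, ℝ)) :=
  {t | t.1 ∈ limitSet o Gs ∧ t.2.1 ∈ limitSet o Gs ∧ t.2.2 ∈ limitSet o Gs ∧
    t.1 ≠ t.2.1 ∧ t.1 ≠ t.2.2 ∧ t.2.1 ≠ t.2.2}

/-- The 2-cocycle `ω(σ, η, β) = α(σ, η) + α(η, β) + α(β, σ)` associated to a map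
`α : 𝒜(B) → C_b(G × G)`. -/
def omegaOf {o : X} {Gs : Subgroup (X ≃ᵢ X)} {B : ℝ}
    (α : ↥(ABSet o B) → BoundedContinuousFunction (↥Gs × ↥Gs) ℝ)
    (τ : ↥(TSet o Gs B)) : ↥Gs × ↥Gs → ℝ :=
  fun z =>
    α ⟨((τ : C(X, ℝ) × C(X, ℝ) × C(X, ℝ)).1, (τ : C(X, ℝ) × C(X, ℝ) × C(X, ℝ)).2.1),
        τ.2.2.2.2.1⟩ z +
    α ⟨((τ : C(X, ℝ) × C(X, ℝ) × C(X, ℝ)).2.1, (τ : C(X, ℝ) × C(X, ℝ) × C(X, ℝ)).2.2),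
        τ.2.2.2.2.2.1⟩ z +
    α ⟨((τ : C(X, ℝ) × C(X, ℝ) × C(X, ℝ)).2.2, (τ : C(X, ℝ) × C(X, ℝ) × C(X, ℝ)).1),
        τ.2.2.2.2.2.2⟩ z

/-- The subset `𝒫_{≥3}(Λ)` of probability measures on the compactification which are
supported on `Λ` and not concentrated on at most two points. -/
def PThree (o : X) (Gs : Subgroup (X ≃ᵢ X)) [MeasurableSpace C(X, ℝ)] :
    Set (MeasureTheory.ProbabilityMeasure C(X, ℝ)) :=
  {ν | ν.toMeasure (limitSet o Gs)ᶜ = 0 ∧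
    ∀ a b : C(X, ℝ), ν.toMeasure {a, b} < 1}

/-! ## Hadamard-manifold notions for Corollary `rankrig` -/

/-- Geodesic completeness: every nontrivial geodesic segment extends to a biinfinite
geodesic line. -/
def GeodesicallyComplete (X : Type u) [MetricSpace X] : Prop :=
  ∀ (γ : ℝ → X) (a b : ℝ), a < b → GeodesicOn γ (Set.Icc a b) →
    ∃ γ' : ℝ → X, GeodesicOn γ' Set.univ ∧ ∀ t ∈ Set.Icc a b, γ' t = γ t

/-- `X` is a (globally) symmetric space: the geodesic symmetry at every point extends to
an isometry of `X`. -/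
def IsSymmetricSpace (X : Type u) [MetricSpace X] : Prop :=
  ∀ p : X, ∃ σ : X ≃ᵢ X, σ p = p ∧
    ∀ γ : ℝ → X, GeodesicOn γ Set.univ → γ 0 = p → ∀ t : ℝ, σ (γ t) = γ (-t)

/-- `X` is irreducible: it is not isometric to a non-trivial product (with the
Pythagorean/ℓ² product metric). -/
def IsIrreducibleMetricSpace (X : Type u) [MetricSpace X] : Prop :=
  ¬ ∃ (Y Z : Type u) (_ : MetricSpace Y) (_ : MetricSpace Z) (f : X ≃ Y × Z),
      (∃ y y' : Y, y ≠ y') ∧ (∃ z z' : Z, z ≠ z') ∧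
      ∀ a b : X, dist a b ^ 2 =
        dist (f a).1 (f b).1 ^ 2 + dist (f a).2 (f b).2 ^ 2

/-- An isometry is parabolic if its displacement function does not attain its infimum. -/
def IsParabolicIsom (g : X ≃ᵢ X) : Prop :=
  ¬ ∃ x : X, ∀ y : X, dist x (g x) ≤ dist y (g y)

section Dev

open Metric Set Filter Topology
open scoped ENNReal Classical

set_option linter.unusedSectionVars false

namespace LocalRay

variable {X : Type} [MetricSpace X] [ProperSpace X] [CAT0Space X]

lemma geo_dist {c : ℝ → X} {a : ℝ} (h : GeodesicOn c (Set.Ici a)) {s t : ℝ}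
    (hs : a ≤ s) (ht : a ≤ t) : dist (c s) (c t) = |s - t| := h s hs t ht

lemma isClosed_ray {c : ℝ → X} {a : ℝ} (h : GeodesicOn c (Set.Ici a)) :
    IsClosed (c '' Set.Ici a) := by
  rw [← closure_subset_iff_isClosed]
  intro y hy
  set T : ℝ := a + dist y (c a) with hT
  have hTa : a ≤ T := by have := dist_nonneg (x := y) (y := c a); linarith
  have key : ∀ ε : ℝ, 0 < ε → dist y (c T) ≤ 2 * ε := by
    intro ε hε
    obtain ⟨p, hp, hyp⟩ := Metric.mem_closure_iff.1 hy ε hε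
    obtain ⟨s, hs, rfl⟩ := hp
    have h1 : |dist y (c a) - dist (c s) (c a)| ≤ dist y (c s) := abs_dist_sub_le _ _ _
    have h2 : dist (c s) (c a) = s - a := by
      rw [geo_dist h hs le_rfl, abs_of_nonneg (by linarith [mem_Ici.1 hs])]
    have h3 : dist (c T) (c s) = |T - s| := geo_dist h hTa hs
    have h4 : |T - s| ≤ dist y (c s) := by
      rw [abs_sub_comm] at h1 ⊢
      have : s - T = dist (c s) (c a) - dist y (c a) := by rw [h2]; ring
      rw [this]; exact h1
    calc dist y (c T) ≤ dist y (c s) + dist (c s) (c T) := dist_triangle _ _ _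
      _ ≤ ε + ε := by
          rw [dist_comm (c s) (c T), h3]
          exact add_le_add hyp.le (le_trans h4 hyp.le)
      _ = 2 * ε := by ring
  have hle : dist y (c T) ≤ 0 := by
    by_contra hcon
    push_neg at hcon
    have := key (dist y (c T) / 4) (by linarith)
    linarith
  have hy0 : dist y (c T) = 0 := le_antisymm hle dist_nonneg
  exact ⟨T, mem_Ici.2 hTa, (eq_of_dist_eq_zero hy0).symm⟩

lemma ray_nonempty (c : ℝ → X) (a : ℝ) : (c '' Set.Ici a).Nonempty :=
  ⟨c a, a, mem_Ici.2 le_rfl, rfl⟩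

lemma infDist_le_ray {c : ℝ → X} {a : ℝ} (w : X) {u : ℝ} (hu : a ≤ u) :
    infDist w (c '' Set.Ici a) ≤ dist w (c u) :=
  infDist_le_dist_of_mem ⟨u, mem_Ici.2 hu, rfl⟩

/-- CN inequality applied to a midpoint on the geodesic. -/
lemma cn_mid {c : ℝ → X} {a : ℝ} (h : GeodesicOn c (Set.Ici a)) {s t : ℝ}
    (hs : a ≤ s) (ht : a ≤ t) (w : X) :
    dist w (c ((s + t) / 2)) ^ 2 ≤
      dist w (c s) ^ 2 / 2 + dist w (c t) ^ 2 / 2 - dist (c s) (c t) ^ 2 / 4 := by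
  have hm : a ≤ (s + t) / 2 := by linarith
  have h1 : dist (c s) (c ((s + t) / 2)) = dist (c s) (c t) / 2 := by
    rw [geo_dist h hs hm, geo_dist h hs ht]
    rw [show s - (s + t) / 2 = (s - t) / 2 by ring, abs_div]
    simp
  have h2 : dist (c t) (c ((s + t) / 2)) = dist (c s) (c t) / 2 := by
    rw [geo_dist h ht hm, geo_dist h hs ht]
    rw [show t - (s + t) / 2 = -((s - t) / 2) by ring, abs_neg, abs_div]
    simp
  exact CAT0Space.cn_ineq w (c s) (c t) (c ((s + t) / 2)) h1 h2

lemma proj_unique {c : ℝ → X} {a : ℝ} (h : GeodesicOn c (Set.Ici a)) {w : X} {s t : ℝ}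
    (hs : a ≤ s) (ht : a ≤ t)
    (h1 : dist w (c s) = infDist w (c '' Set.Ici a))
    (h2 : dist w (c t) = infDist w (c '' Set.Ici a)) : s = t := by
  have hm : a ≤ (s + t) / 2 := by linarith
  have h3 := cn_mid h hs ht w
  have h4 : infDist w (c '' Set.Ici a) ≤ dist w (c ((s + t) / 2)) := infDist_le_ray w hm
  have h5 : (0:ℝ) ≤ infDist w (c '' Set.Ici a) := infDist_nonneg
  have h6 : dist (c s) (c t) = 0 := by nlinarith [dist_nonneg (x := c s) (y := c t)]
  have := geo_dist h hs ht
  rw [h6] at this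
  have := abs_eq_zero.1 this.symm
  linarith [this]

/-- The parameter of the projection of `w` to the geodesic ray `c : [a, ∞) → X`. -/
noncomputable def prm (c : ℝ → X) (a : ℝ) (w : X) : ℝ :=
  sInf {s | a ≤ s ∧ dist w (c s) = infDist w (c '' Set.Ici a)}

lemma prm_spec {c : ℝ → X} {a : ℝ} (h : GeodesicOn c (Set.Ici a)) (w : X) :
    a ≤ prm c a w ∧ dist w (c (prm c a w)) = infDist w (c '' Set.Ici a) := by
  obtain ⟨y, hy, hdy⟩ := (isClosed_ray h).exists_infDist_eq_dist (ray_nonempty c a) w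
  obtain ⟨s, hs, rfl⟩ := hy
  have hset : {s' | a ≤ s' ∧ dist w (c s') = infDist w (c '' Set.Ici a)} = {s} := by
    ext s'
    constructor
    · rintro ⟨h1, h2⟩
      exact proj_unique h h1 hs h2 hdy.symm
    · rintro rfl
      exact ⟨hs, hdy.symm⟩
  rw [prm, hset, csInf_singleton]
  exact ⟨hs, hdy.symm⟩

lemma prm_eq {c : ℝ → X} {a : ℝ} (h : GeodesicOn c (Set.Ici a)) {w : X} {s : ℝ}
    (hs : a ≤ s) (hd : dist w (c s) = infDist w (c '' Set.Ici a)) : prm c a w = s :=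
  proj_unique h (prm_spec h w).1 hs (prm_spec h w).2 hd

lemma prm_mem_projSet {c : ℝ → X} {a : ℝ} (h : GeodesicOn c (Set.Ici a)) (w : X) :
    c (prm c a w) ∈ projSet (c '' Set.Ici a) w :=
  ⟨⟨prm c a w, mem_Ici.2 (prm_spec h w).1, rfl⟩, (prm_spec h w).2⟩

lemma projSet_eq_prm {c : ℝ → X} {a : ℝ} (h : GeodesicOn c (Set.Ici a)) {w p : X}
    (hp : p ∈ projSet (c '' Set.Ici a) w) : p = c (prm c a w) := by
  obtain ⟨⟨s, hs, rfl⟩, hd⟩ := hp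
  rw [prm_eq h hs hd]

lemma prm_self {c : ℝ → X} {a : ℝ} (h : GeodesicOn c (Set.Ici a)) {s : ℝ} (hs : a ≤ s) :
    prm c a (c s) = s :=
  prm_eq h hs (by
    have h0 : infDist (c s) (c '' Set.Ici a) ≤ 0 := by
      simpa using infDist_le_ray (c := c) (c s) hs
    have h1 : (0:ℝ) ≤ infDist (c s) (c '' Set.Ici a) := infDist_nonneg
    simp [le_antisymm h0 h1])

section Contracting

variable {c : ℝ → X} {a B : ℝ}

lemma ball_jump (hcon : ContractingOn B c (Set.Ici a)) (hB : 0 < B) {w w' : X} {m : ℝ}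
    (hm : 0 < m) (hd : dist w w' ≤ infDist w (c '' Set.Ici a) - m) :
    |prm c a w - prm c a w'| ≤ B := by
  have h := hcon.1
  set r := infDist w (c '' Set.Ici a) - m with hr
  have hdisj : Disjoint (Metric.closedBall w r) (c '' Set.Ici a) := by
    rw [Set.disjoint_left]
    intro p hp hpA
    have h1 : dist w p ≤ r := by rwa [mem_closedBall, dist_comm] at hp
    have h2 : infDist w (c '' Set.Ici a) ≤ dist w p := infDist_le_dist_of_mem hpA
    linarith
  have hdiam := hcon.2 w r hdisj
  have hw : w ∈ Metric.closedBall w r := by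
    simp only [mem_closedBall, dist_self]
    linarith [dist_nonneg (x := w) (y := w')]
  have hw' : w' ∈ Metric.closedBall w r := by rwa [mem_closedBall, dist_comm]
  have hp1 : c (prm c a w) ∈ ⋃ x ∈ Metric.closedBall w r, projSet (c '' Set.Ici a) x := by
    exact Set.mem_biUnion hw (prm_mem_projSet h w)
  have hp2 : c (prm c a w') ∈ ⋃ x ∈ Metric.closedBall w r, projSet (c '' Set.Ici a) x := by
    exact Set.mem_biUnion hw' (prm_mem_projSet h w')
  have hed := le_trans (EMetric.edist_le_diam_of_mem hp1 hp2) hdiam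
  have hdd : dist (c (prm c a w)) (c (prm c a w')) ≤ B := by
    rw [edist_dist] at hed
    exact (ENNReal.ofReal_le_ofReal_iff hB.le).1 hed
  rwa [geo_dist h (prm_spec h w).1 (prm_spec h w').1] at hdd

/-- basic bound: `|prm w − u| ≤ infDist w + dist w (c u)`. -/
lemma abs_prm_sub_le (h : GeodesicOn c (Set.Ici a)) (w : X) {u : ℝ} (hu : a ≤ u) :
    |prm c a w - u| ≤ infDist w (c '' Set.Ici a) + dist w (c u) := by
  have h1 : dist (c (prm c a w)) (c u) = |prm c a w - u| :=
    geo_dist h (prm_spec h w).1 hu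
  calc |prm c a w - u| = dist (c (prm c a w)) (c u) := h1.symm
    _ ≤ dist (c (prm c a w)) w + dist w (c u) := dist_triangle _ _ _
    _ = infDist w (c '' Set.Ici a) + dist w (c u) := by
        rw [dist_comm, (prm_spec h w).2]

/-- The fundamental contraction estimate L1. -/
lemma L1 (hcon : ContractingOn B c (Set.Ici a)) (hB : 0 < B) (w : X) {u : ℝ} (hu : a ≤ u) :
    |prm c a w - u| ≤ dist w (c u) - infDist w (c '' Set.Ici a) + 2 * B + 2 * min B 1 := by
  have h := hcon.1
  set m := min B 1 with hmdef
  have hm : 0 < m := lt_min hB one_pos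
  have hmB : m ≤ B := min_le_left _ _
  have main : ∀ n : ℕ, ∀ w : X, ∀ u : ℝ, a ≤ u → dist w (c u) ≤ n * B →
      |prm c a w - u| ≤ dist w (c u) - infDist w (c '' Set.Ici a) + 2 * B + 2 * m := by
    intro n
    induction n with
    | zero =>
      intro w u hu hd
      have h0 : infDist w (c '' Set.Ici a) ≤ dist w (c u) := infDist_le_ray w hu
      have := abs_prm_sub_le h w hu
      simp only [Nat.cast_zero, zero_mul] at hd
      have hd0 : dist w (c u) = 0 := le_antisymm hd dist_nonneg
      have hi0 : infDist w (c '' Set.Ici a) = 0 :=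
        le_antisymm (by rw [← hd0]; exact h0) infDist_nonneg
      rw [hd0, hi0] at this ⊢
      linarith
    | succ n ih =>
      intro w u hu hd
      by_cases hbase : infDist w (c '' Set.Ici a) ≤ B + m
      · have := abs_prm_sub_le h w hu
        have h0 : infDist w (c '' Set.Ici a) ≤ dist w (c u) := infDist_le_ray w hu
        linarith
      · push_neg at hbase
        obtain ⟨σ, hσ0, hσd, hσiso⟩ := CAT0Space.exists_geodesic w (c u)
        set D := dist w (c u) with hD
        set δ := infDist w (c '' Set.Ici a) - m with hδ
        have hδpos : 0 < δ := by simp only [hδ]; linarith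
        have hδD : δ ≤ D := by
          have : infDist w (c '' Set.Ici a) ≤ D := infDist_le_ray w hu
          simp only [hδ]; linarith
        set w₁ := σ δ with hw₁
        have hmem0 : (0:ℝ) ∈ Set.Icc 0 D := ⟨le_rfl, dist_nonneg⟩
        have hmemδ : δ ∈ Set.Icc 0 D := ⟨hδpos.le, hδD⟩
        have hmemD : D ∈ Set.Icc 0 D := ⟨dist_nonneg, le_rfl⟩
        have hww₁ : dist w w₁ = δ := by
          have := hσiso 0 hmem0 δ hmemδ
          rw [hσ0] at this
          rw [this, abs_of_nonpos (by linarith)]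
          ring
        have hw₁u : dist w₁ (c u) = D - δ := by
          have := hσiso δ hmemδ D hmemD
          rw [hσd] at this
          rw [this, abs_of_nonpos (by linarith)]
          ring
        have hjump : |prm c a w - prm c a w₁| ≤ B := by
          refine ball_jump hcon hB hm ?_
          rw [hww₁]
        have htri : |prm c a w - u| ≤ |prm c a w - prm c a w₁| + |prm c a w₁ - u| := by
          have := abs_sub_le (prm c a w) (prm c a w₁) u
          linarith [this]
        have hi1 : infDist w (c '' Set.Ici a) - δ ≤ infDist w₁ (c '' Set.Ici a) := by
          have h5 := infDist_le_infDist_add_dist (x := w) (y := w₁) (s := c '' Set.Ici a)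
          rw [hww₁] at h5
          linarith
        by_cases h2 : infDist w₁ (c '' Set.Ici a) ≤ B + m
        · have hb := abs_prm_sub_le h w₁ hu
          have : |prm c a w₁ - u| ≤ (B + m) + (D - δ) := by
            rw [hw₁u] at hb; linarith
          simp only [hδ] at this
          linarith
        · push_neg at h2
          have hrec : dist w₁ (c u) ≤ n * B := by
            rw [hw₁u]
            have hBδ : B ≤ δ := by simp only [hδ]; linarith
            push_cast [Nat.cast_succ] at hd ⊢
            linarith
          have := ih w₁ u hu hrec
          rw [hw₁u] at this
          simp only [hδ] at this ⊢
          linarith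
  obtain ⟨n, hn⟩ := exists_nat_ge (dist w (c u) / B)
  have : dist w (c u) ≤ n * B := by
    rw [div_le_iff₀ hB] at hn
    linarith
  exact main n w u hu this

lemma tail_trick (hcon : ContractingOn B c (Set.Ici a)) (hB : 0 < B) (w w' : X) :
    |prm c a w - prm c a w'| ≤ 2 * dist w w' + 2 * B + 2 * min B 1 := by
  have h := hcon.1
  have h1 := L1 hcon hB w (prm_spec h w').1
  have h2 : dist w (c (prm c a w')) ≤ dist w w' + infDist w' (c '' Set.Ici a) := by
    calc dist w (c (prm c a w')) ≤ dist w w' + dist w' (c (prm c a w')) := dist_triangle _ _ _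
      _ = dist w w' + infDist w' (c '' Set.Ici a) := by rw [(prm_spec h w').2]
  have h3 : infDist w' (c '' Set.Ici a) ≤ infDist w (c '' Set.Ici a) + dist w' w :=
    infDist_le_infDist_add_dist
  rw [dist_comm w' w] at h3
  linarith

end Contracting

section Busemann

variable {o : X} {η : C(X, ℝ)}

lemma geodesicOn_mono {c : ℝ → X} {I J : Set ℝ} (h : GeodesicOn c J) (hIJ : I ⊆ J) :
    GeodesicOn c I := fun s hs t ht => h s (hIJ hs) t (hIJ ht)

lemma ends_eval {c : ℝ → X} (hE : EndsAt o c η) (z : X) :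
    Tendsto (fun t => dist (c t) z - dist (c t) o) atTop (𝓝 (η z)) := by
  have hc : Continuous fun f : C(X, ℝ) => f z := continuous_eval_const z
  have h2 := (hc.tendsto η).comp hE
  simpa [Function.comp_def, bcomp] using h2

lemma begins_eval {c : ℝ → X} (hE : BeginsAt o c η) (z : X) :
    Tendsto (fun t => dist (c t) z - dist (c t) o) atBot (𝓝 (η z)) := by
  have hc : Continuous fun f : C(X, ℝ) => f z := continuous_eval_const z
  have h2 := (hc.tendsto η).comp hE
  simpa [Function.comp_def, bcomp] using h2

lemma ends_diff {c : ℝ → X} {a : ℝ} (h : GeodesicOn c (Set.Ici a)) (hE : EndsAt o c η)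
    {u u' : ℝ} (hu : a ≤ u) (hu' : a ≤ u') : η (c u) - η (c u') = u' - u := by
  have h1 := (ends_eval hE (c u)).sub (ends_eval hE (c u'))
  have h2 : ∀ᶠ t in atTop,
      (dist (c t) (c u) - dist (c t) o) - (dist (c t) (c u') - dist (c t) o) = u' - u := by
    filter_upwards [eventually_ge_atTop (max u u')] with t ht
    have htu : u ≤ t := le_trans (le_max_left _ _) ht
    have htu' : u' ≤ t := le_trans (le_max_right _ _) ht
    have hta : a ≤ t := le_trans hu htu
    have e1 : dist (c t) (c u) = t - u := by
      rw [geo_dist h hta hu, abs_of_nonneg (by linarith)]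
    have e2 : dist (c t) (c u') = t - u' := by
      rw [geo_dist h hta hu', abs_of_nonneg (by linarith)]
    rw [e1, e2]; ring
  exact tendsto_nhds_unique (h1.congr' h2) tendsto_const_nhds

lemma ends_lip {c : ℝ → X} (hE : EndsAt o c η) (z z' : X) : η z - η z' ≤ dist z z' := by
  have h1 := (ends_eval hE z).sub (ends_eval hE z')
  refine le_of_tendsto h1 (Filter.Eventually.of_forall fun t => ?_)
  have := dist_triangle (c t) z' z
  rw [dist_comm z' z] at this
  linarith

/-- The Busemann function grows by `infDist − (2B+2m)` from the projection. -/
lemma ends_ge_proj {c : ℝ → X} {B : ℝ} (hcon : ContractingOn B c (Set.Ici 0)) (hB : 0 < B)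
    (hE : EndsAt o c η) (w : X) :
    η (c (prm c 0 w)) + infDist w (c '' Set.Ici 0) - (2 * B + 2 * min B 1) ≤ η w := by
  have h := hcon.1
  have h1 := (ends_eval hE w).sub (ends_eval hE (c (prm c 0 w)))
  have h2 : η w - η (c (prm c 0 w)) ≥ infDist w (c '' Set.Ici 0) - (2 * B + 2 * min B 1) := by
    refine ge_of_tendsto h1 ?_
    filter_upwards [eventually_ge_atTop (max (prm c 0 w) 0)] with t ht
    have ht0 : (0:ℝ) ≤ t := le_trans (le_max_right _ _) ht
    have htp : prm c 0 w ≤ t := le_trans (le_max_left _ _) ht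
    have hL1 := L1 hcon hB w ht0
    have e1 : dist (c t) (c (prm c 0 w)) = t - prm c 0 w := by
      rw [geo_dist h ht0 (prm_spec h w).1, abs_of_nonneg (by linarith)]
    have e2 : t - prm c 0 w ≤ |prm c 0 w - t| := by
      rw [abs_sub_comm]; exact le_abs_self _
    have e3 : dist w (c t) = dist (c t) w := dist_comm _ _
    rw [e1]
    rw [e3] at hL1
    linarith [le_trans e2 hL1]
  linarith

end Busemann

section Interaction

variable {o : X} {B : ℝ} {γ ζ : ℝ → X} {ξ η : C(X, ℝ)}

/-- The calibration identity: `q σ - σ + Ē ∈ [g σ - (2B+2m), g σ]`. -/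
lemma calib (hcon : ContractingOn B γ (Set.Ici 0)) (hB : 0 < B)
    (hγη : EndsAt o γ η) (hζη : EndsAt o ζ η) (hζgeo : GeodesicOn ζ Set.univ) (σ : ℝ) :
    infDist (ζ σ) (γ '' Set.Ici 0) - (2 * B + 2 * min B 1)
        ≤ prm γ 0 (ζ σ) - σ + (η (ζ 0) - η (γ 0)) ∧
      prm γ 0 (ζ σ) - σ + (η (ζ 0) - η (γ 0)) ≤ infDist (ζ σ) (γ '' Set.Ici 0) := by
  have hγ := hcon.1
  have hζa : GeodesicOn ζ (Set.Ici (min σ 0)) := geodesicOn_mono hζgeo (subset_univ _)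
  have hηζ : η (ζ σ) - η (ζ 0) = 0 - σ :=
    ends_diff hζa hζη (min_le_left _ _) (min_le_right _ _)
  have hηγ : η (γ (prm γ 0 (ζ σ))) - η (γ 0) = 0 - prm γ 0 (ζ σ) :=
    ends_diff hγ hγη (prm_spec hγ (ζ σ)).1 le_rfl
  constructor
  · have h1 := ends_ge_proj hcon hB hγη (ζ σ)
    linarith
  · have hlip := ends_lip hζη (ζ σ) (γ (prm γ 0 (ζ σ)))
    rw [(prm_spec hγ (ζ σ)).2] at hlip
    linarith

/-- One ball-jump brings `ζ` close to `γ`. -/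
lemma g_jump (hcon : ContractingOn B γ (Set.Ici 0)) (hB : 0 < B)
    (hγη : EndsAt o γ η) (hζη : EndsAt o ζ η) (hζgeo : GeodesicOn ζ Set.univ)
    {σ Δ : ℝ} (hΔ0 : 0 ≤ Δ) (hΔ : Δ ≤ infDist (ζ σ) (γ '' Set.Ici 0) - min B 1) :
    infDist (ζ (σ + Δ)) (γ '' Set.Ici 0)
      ≤ infDist (ζ σ) (γ '' Set.Ici 0) - Δ + 3 * B + 2 * min B 1 := by
  have hm : 0 < min B 1 := lt_min hB one_pos
  have hd : dist (ζ σ) (ζ (σ + Δ)) = Δ := by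
    rw [hζgeo σ trivial (σ + Δ) trivial, abs_of_nonpos (by linarith)]; ring
  have hjump : |prm γ 0 (ζ σ) - prm γ 0 (ζ (σ + Δ))| ≤ B :=
    ball_jump hcon hB hm (by rw [hd]; exact hΔ)
  have h1 := (calib hcon hB hγη hζη hζgeo σ).2
  have h2 := (calib hcon hB hγη hζη hζgeo (σ + Δ)).1
  have habs := abs_le.1 hjump
  linarith [habs.1, habs.2]

/-- The projection of the negative end of `ζ` lands near `t₀`. -/
lemma q_window (hcon : ContractingOn B γ (Set.Ici 0)) (hB : 0 < B)
    (hζgeo : GeodesicOn ζ Set.univ) (hξ : BeginsAt o ζ ξ) {t₀ : ℝ} (ht₀ : 0 ≤ t₀)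
    (hmin : ∀ s, 0 ≤ s → ξ (γ t₀) ≤ ξ (γ s)) :
    ∃ s : ℝ, |prm γ 0 (ζ s) - t₀| ≤ 2 * B + 3 * min B 1 := by
  have hγ := hcon.1
  set m := min B 1 with hmdef
  have hm : 0 < m := lt_min hB one_pos
  have hmB : m ≤ B := min_le_left _ _
  -- upper bound claim
  have hupper : ∃ S : ℝ, ∀ s ≤ S, prm γ 0 (ζ s) ≤ t₀ + (2 * B + 3 * m) := by
    by_contra hc
    push_neg at hc
    choose f hf1 hf2 using fun n : ℕ => hc (-(n : ℝ))
    have hft : Tendsto f atTop atBot := by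
      refine tendsto_atBot_mono hf1 ?_
      simpa using (tendsto_neg_atBot_iff (f := fun n : ℕ => (n : ℝ))).2
        tendsto_natCast_atTop_atTop
    set u' : ℝ := t₀ + (2 * B + 3 * m) with hu'def
    have hu0 : (0:ℝ) ≤ u' := by positivity
    have hXi := ((begins_eval hξ (γ t₀)).sub (begins_eval hξ (γ u'))).comp hft
    have hgeb : ξ (γ t₀) - ξ (γ u') ≥ m := by
      refine ge_of_tendsto hXi (Filter.Eventually.of_forall fun n => ?_)
      set s := f n with hs
      have hq : u' < prm γ 0 (ζ s) := hf2 n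
      have hL := L1 hcon hB (ζ s) ht₀
      have habs : prm γ 0 (ζ s) - t₀ ≤ |prm γ 0 (ζ s) - t₀| := le_abs_self _
      have hlow : dist (ζ s) (γ t₀) ≥
          infDist (ζ s) (γ '' Set.Ici 0) + (prm γ 0 (ζ s) - t₀) - (2 * B + 2 * m) := by
        linarith
      have hupp : dist (ζ s) (γ u') ≤
          infDist (ζ s) (γ '' Set.Ici 0) + (prm γ 0 (ζ s) - u') := by
        have htri := dist_triangle (ζ s) (γ (prm γ 0 (ζ s))) (γ u')
        have hdd : dist (γ (prm γ 0 (ζ s))) (γ u') = prm γ 0 (ζ s) - u' := by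
          rw [geo_dist hγ (prm_spec hγ (ζ s)).1 hu0, abs_of_nonneg (by linarith)]
        rw [(prm_spec hγ (ζ s)).2, hdd] at htri
        exact htri
      simp only [Function.comp]
      linarith
    have := hmin u' hu0
    linarith
  -- lower bound claim
  have hlower : ∃ S : ℝ, ∀ s ≤ S, t₀ - (2 * B + 3 * m) ≤ prm γ 0 (ζ s) := by
    by_cases ht' : t₀ ≤ 2 * B + 3 * m
    · exact ⟨0, fun s _ => by
        have := (prm_spec hγ (ζ s)).1
        linarith⟩
    · push_neg at ht'
      by_contra hc
      push_neg at hc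
      choose f hf1 hf2 using fun n : ℕ => hc (-(n : ℝ))
      have hft : Tendsto f atTop atBot := by
        refine tendsto_atBot_mono hf1 ?_
        simpa using (tendsto_neg_atBot_iff (f := fun n : ℕ => (n : ℝ))).2
          tendsto_natCast_atTop_atTop
      set u' : ℝ := t₀ - (2 * B + 3 * m) with hu'def
      have hu0 : (0:ℝ) ≤ u' := by simp only [hu'def]; linarith
      have hXi := ((begins_eval hξ (γ t₀)).sub (begins_eval hξ (γ u'))).comp hft
      have hgeb : ξ (γ t₀) - ξ (γ u') ≥ m := by
        refine ge_of_tendsto hXi (Filter.Eventually.of_forall fun n => ?_)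
        set s := f n with hs
        have hq : prm γ 0 (ζ s) < u' := hf2 n
        have hL := L1 hcon hB (ζ s) ht₀
        have habs : t₀ - prm γ 0 (ζ s) ≤ |prm γ 0 (ζ s) - t₀| := by
          rw [abs_sub_comm]; exact le_abs_self _
        have hlow : dist (ζ s) (γ t₀) ≥
            infDist (ζ s) (γ '' Set.Ici 0) + (t₀ - prm γ 0 (ζ s)) - (2 * B + 2 * m) := by
          linarith
        have hupp : dist (ζ s) (γ u') ≤
            infDist (ζ s) (γ '' Set.Ici 0) + (u' - prm γ 0 (ζ s)) := by
          have htri := dist_triangle (ζ s) (γ (prm γ 0 (ζ s))) (γ u')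
          have hdd : dist (γ (prm γ 0 (ζ s))) (γ u') = u' - prm γ 0 (ζ s) := by
            rw [geo_dist hγ (prm_spec hγ (ζ s)).1 hu0, abs_of_nonpos (by linarith)]
            ring
          rw [(prm_spec hγ (ζ s)).2, hdd] at htri
          exact htri
        simp only [Function.comp]
        linarith
      have := hmin u' hu0
      linarith
  obtain ⟨S₀, hS₀⟩ := hupper
  obtain ⟨S₁, hS₁⟩ := hlower
  refine ⟨min S₀ S₁, abs_le.2 ⟨?_, ?_⟩⟩
  · have := hS₁ (min S₀ S₁) (min_le_right _ _); linarith
  · have := hS₀ (min S₀ S₁) (min_le_left _ _); linarith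

/-- Part 1: `ζ` passes within `9B+6` of the projection point of `ξ`. -/
lemma part1 (hcon : ContractingOn B γ (Set.Ici 0)) (hB : 0 < B)
    (hγη : EndsAt o γ η) (hζη : EndsAt o ζ η) (hζgeo : GeodesicOn ζ Set.univ)
    (hξ : BeginsAt o ζ ξ) {t₀ : ℝ} (ht₀ : 0 ≤ t₀)
    (hmin : ∀ s, 0 ≤ s → ξ (γ t₀) ≤ ξ (γ s)) :
    ∃ t : ℝ, dist (ζ t) (γ t₀) ≤ 9 * B + 6 := by
  have hγ := hcon.1
  set m := min B 1 with hmdef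
  have hm : 0 < m := lt_min hB one_pos
  have hmB : m ≤ B := min_le_left _ _
  have hm1 : m ≤ 1 := min_le_right _ _
  obtain ⟨s, hs⟩ := q_window hcon hB hζgeo hξ ht₀ hmin
  have hwin := abs_le.1 hs
  have hdq : ∀ τ : ℝ, dist (ζ τ) (γ t₀) ≤
      infDist (ζ τ) (γ '' Set.Ici 0) + |prm γ 0 (ζ τ) - t₀| := by
    intro τ
    have htri := dist_triangle (ζ τ) (γ (prm γ 0 (ζ τ))) (γ t₀)
    rw [(prm_spec hγ (ζ τ)).2, geo_dist hγ (prm_spec hγ (ζ τ)).1 ht₀] at htri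
    exact htri
  by_cases hg : infDist (ζ s) (γ '' Set.Ici 0) ≤ m
  · refine ⟨s, ?_⟩
    have := hdq s
    linarith
  · push_neg at hg
    set Δ := infDist (ζ s) (γ '' Set.Ici 0) - m with hΔdef
    have hΔ0 : 0 ≤ Δ := by simp only [hΔdef]; linarith
    have hjmp := g_jump hcon hB hγη hζη hζgeo hΔ0 (le_of_eq hΔdef)
    have hd : dist (ζ s) (ζ (s + Δ)) = Δ := by
      rw [hζgeo s trivial (s + Δ) trivial, abs_of_nonpos (by linarith)]; ring
    have hq : |prm γ 0 (ζ s) - prm γ 0 (ζ (s + Δ))| ≤ B :=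
      ball_jump hcon hB hm (by rw [hd])
    have hqs := abs_le.1 hq
    refine ⟨s + Δ, ?_⟩
    have h1 := hdq (s + Δ)
    have h2 : |prm γ 0 (ζ (s + Δ)) - t₀| ≤ 3 * B + 3 * m := by
      rw [abs_le]
      constructor <;> [linarith [hqs.2, hwin.1]; linarith [hqs.1, hwin.2]]
    have h3 : infDist (ζ (s + Δ)) (γ '' Set.Ici 0) ≤ 3 * B + 3 * m := by
      have hΔeq : infDist (ζ s) (γ '' Set.Ici 0) - Δ = m := by
        simp only [hΔdef]; ring
      linarith
    linarith

end Interaction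

section Part2

variable {o : X} {B : ℝ} {γ ζ : ℝ → X} {η : C(X, ℝ)}

lemma g_lip (hζgeo : GeodesicOn ζ Set.univ) (A : Set X) (σ σ' : ℝ) :
    infDist (ζ σ') A ≤ infDist (ζ σ) A + |σ - σ'| := by
  have h1 := infDist_le_infDist_add_dist (x := ζ σ') (y := ζ σ) (s := A)
  have h2 : dist (ζ σ') (ζ σ) = |σ' - σ| := hζgeo σ' trivial σ trivial
  rw [h2, abs_sub_comm] at h1
  exact h1

/-- Global bound on the distance from `ζ[t,∞)` to `γ[0,∞)`. -/
lemma g_glob (hcon : ContractingOn B γ (Set.Ici 0)) (hB : 0 < B)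
    (hγη : EndsAt o γ η) (hζη : EndsAt o ζ η) (hζgeo : GeodesicOn ζ Set.univ)
    {t : ℝ} (hgt : infDist (ζ t) (γ '' Set.Ici 0) ≤ 9 * B + 6) :
    ∀ σ, t ≤ σ → infDist (ζ σ) (γ '' Set.Ici 0) ≤ 18 * B + 12 := by
  set m := min B 1 with hmdef
  have hm : 0 < m := lt_min hB one_pos
  have hmB : m ≤ B := min_le_left _ _
  have hm1 : m ≤ 1 := min_le_right _ _
  set g : ℝ → ℝ := fun σ => infDist (ζ σ) (γ '' Set.Ici 0) with hgdef
  have hζiso : Isometry ζ := Isometry.of_dist_eq fun s t => by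
    rw [hζgeo s trivial t trivial, Real.dist_eq]
  have gcont : Continuous g := (continuous_infDist_pt _).comp hζiso.continuous
  have gnneg : ∀ σ, 0 ≤ g σ := fun σ => infDist_nonneg
  have glip : ∀ σ σ', g σ' ≤ g σ + |σ - σ'| := fun σ σ' => g_lip hζgeo _ σ σ'
  set θ := 3 * B + 3 * m with hθdef
  set τ₁ := t + max (g t - m) 0 with hτ₁def
  have hτ₁t : t ≤ τ₁ := by
    simp only [hτ₁def]
    have := le_max_right (g t - m) 0
    linarith
  have hθ1 : g τ₁ ≤ θ := by
    by_cases hgtm : g t ≤ m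
    · have hmax : max (g t - m) 0 = 0 := max_eq_right (by linarith)
      have : τ₁ = t := by rw [hτ₁def, hmax]; ring
      rw [this]
      simp only [hθdef]
      linarith
    · push_neg at hgtm
      have hmax : max (g t - m) 0 = g t - m := max_eq_left (by linarith)
      have hjmp := g_jump hcon hB hγη hζη hζgeo (Δ := g t - m) (σ := t)
        (by linarith) le_rfl
      have : τ₁ = t + (g t - m) := by rw [hτ₁def, hmax]
      rw [this]
      simp only [hθdef]
      simp only [hgdef] at hjmp ⊢
      linarith
  have claim2 : ∀ σ', τ₁ ≤ σ' → g σ' ≤ 2 * θ := by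
    intro σ' hσ'
    set S := Set.Icc τ₁ σ' ∩ {τ | g τ ≤ θ} with hSdef
    have hne : τ₁ ∈ S := ⟨⟨le_rfl, hσ'⟩, hθ1⟩
    have hbdd : BddAbove S := ⟨σ', fun x hx => hx.1.2⟩
    have hcl : IsClosed S := isClosed_Icc.inter (isClosed_le gcont continuous_const)
    set σ₃ := sSup S with hσ₃def
    have hσ₃S : σ₃ ∈ S := hcl.csSup_mem ⟨τ₁, hne⟩ hbdd
    have hσ₃1 : τ₁ ≤ σ₃ := hσ₃S.1.1
    have hσ₃2 : σ₃ ≤ σ' := hσ₃S.1.2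
    have hgσ₃ : g σ₃ ≤ θ := hσ₃S.2
    by_cases hcase : σ' - σ₃ ≤ θ
    · have := glip σ₃ σ'
      rw [abs_of_nonpos (by linarith)] at this
      linarith
    · exfalso
      push_neg at hcase
      by_cases hsml : g σ₃ ≤ m
      · set τ' := σ₃ + (θ - m) with hτ'def
        have hθm : m < θ := by simp only [hθdef]; linarith
        have hgτ' : g τ' ≤ θ := by
          have := glip σ₃ τ'
          rw [show σ₃ - τ' = -(θ - m) by rw [hτ'def]; ring,
            abs_neg, abs_of_nonneg (by linarith)] at this
          linarith
        have hτ'S : τ' ∈ S := ⟨⟨by linarith, by linarith⟩, hgτ'⟩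
        have := le_csSup hbdd hτ'S
        simp only [hτ'def] at this
        linarith
      · push_neg at hsml
        set Δ := g σ₃ - m with hΔdef
        have hΔ0 : 0 ≤ Δ := by simp only [hΔdef]; linarith
        have hjmp := g_jump hcon hB hγη hζη hζgeo (σ := σ₃) (Δ := Δ) hΔ0 le_rfl
        have hgτ' : g (σ₃ + Δ) ≤ θ := by
          simp only [hgdef] at hjmp ⊢
          simp only [hθdef]
          simp only [hΔdef] at hjmp ⊢
          linarith
        have hτ'S : σ₃ + Δ ∈ S := by
          refine ⟨⟨by linarith, ?_⟩, hgτ'⟩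
          have : Δ ≤ θ - m := by simp only [hΔdef]; linarith
          linarith
        have := le_csSup hbdd hτ'S
        simp only [hΔdef] at this
        linarith
  intro σ hσ
  by_cases hcase : σ ≤ τ₁
  · have := glip t σ
    rw [abs_of_nonpos (by linarith)] at this
    have hmax : max (g t - m) 0 ≤ g t := by
      refine max_le (by linarith) (gnneg t)
    simp only [hτ₁def] at hcase
    simp only [hgdef] at this hgt ⊢
    linarith
  · push_neg at hcase
    have := claim2 σ hcase.le
    simp only [hθdef, hgdef] at this ⊢
    linarith

/-- Calibration of the `γ`-projection parameter along `ζ[t,∞)`. -/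
lemma q_calib (hcon : ContractingOn B γ (Set.Ici 0)) (hB : 0 < B)
    (hγη : EndsAt o γ η) (hζη : EndsAt o ζ η) (hζgeo : GeodesicOn ζ Set.univ)
    {t : ℝ} (hgt : infDist (ζ t) (γ '' Set.Ici 0) ≤ 9 * B + 6) :
    ∀ σ, t ≤ σ → |prm γ 0 (ζ σ) - (σ - (η (ζ 0) - η (γ 0)))| ≤ 18 * B + 12 := by
  intro σ hσ
  have h1 := (calib hcon hB hγη hζη hζgeo σ).1
  have h2 := (calib hcon hB hγη hζη hζgeo σ).2
  have h3 := g_glob hcon hB hγη hζη hζgeo hgt σ hσ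
  have h4 : (0:ℝ) ≤ infDist (ζ σ) (γ '' Set.Ici 0) := infDist_nonneg
  have hm1 : min B 1 ≤ 1 := min_le_right _ _
  rw [abs_le]
  constructor <;> linarith

/-- Upper bound on the distance to `ζ[t,∞)` (high-projection case). -/
lemma U1 (hcon : ContractingOn B γ (Set.Ici 0)) (hB : 0 < B)
    (hγη : EndsAt o γ η) (hζη : EndsAt o ζ η) (hζgeo : GeodesicOn ζ Set.univ)
    {t : ℝ} (hgt : infDist (ζ t) (γ '' Set.Ici 0) ≤ 9 * B + 6)
    {w : X} (hw : t - (η (ζ 0) - η (γ 0)) ≤ prm γ 0 w) :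
    infDist w (ζ '' Set.Ici t) ≤ infDist w (γ '' Set.Ici 0) + (36 * B + 24) := by
  have hγ := hcon.1
  set Ee := η (ζ 0) - η (γ 0) with hEe
  set σs := prm γ 0 w + Ee with hσs
  have hσt : t ≤ σs := by simp only [hσs]; linarith
  have hq := q_calib hcon hB hγη hζη hζgeo hgt σs hσt
  have hg := g_glob hcon hB hγη hζη hζgeo hgt σs hσt
  have hqa : |prm γ 0 (ζ σs) - prm γ 0 w| ≤ 18 * B + 12 := by
    have : σs - Ee = prm γ 0 w := by simp only [hσs]; ring
    rwa [this] at hq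
  have h1 : infDist w (ζ '' Set.Ici t) ≤ dist w (ζ σs) :=
    infDist_le_dist_of_mem ⟨σs, mem_Ici.2 hσt, rfl⟩
  have h2 : dist w (ζ σs) ≤ dist w (γ (prm γ 0 w))
      + dist (γ (prm γ 0 w)) (γ (prm γ 0 (ζ σs))) + dist (γ (prm γ 0 (ζ σs))) (ζ σs) :=
    dist_triangle4 _ _ _ _
  have e1 : dist w (γ (prm γ 0 w)) = infDist w (γ '' Set.Ici 0) := (prm_spec hγ w).2
  have e2 : dist (γ (prm γ 0 w)) (γ (prm γ 0 (ζ σs))) = |prm γ 0 w - prm γ 0 (ζ σs)| :=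
    geo_dist hγ (prm_spec hγ w).1 (prm_spec hγ (ζ σs)).1
  have e3 : dist (γ (prm γ 0 (ζ σs))) (ζ σs) = infDist (ζ σs) (γ '' Set.Ici 0) := by
    rw [dist_comm]; exact (prm_spec hγ (ζ σs)).2
  rw [e1, e2, e3] at h2
  rw [abs_sub_comm] at hqa
  linarith

/-- Upper bound on the distance to `ζ[t,∞)` (low-projection case). -/
lemma U2 (hcon : ContractingOn B γ (Set.Ici 0)) (hB : 0 < B)
    (hγη : EndsAt o γ η) (hζη : EndsAt o ζ η) (hζgeo : GeodesicOn ζ Set.univ)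
    {t : ℝ} (hgt : infDist (ζ t) (γ '' Set.Ici 0) ≤ 9 * B + 6)
    {w : X} (hw : prm γ 0 w ≤ t - (η (ζ 0) - η (γ 0))) :
    infDist w (ζ '' Set.Ici t) ≤ infDist w (γ '' Set.Ici 0)
      + ((t - (η (ζ 0) - η (γ 0))) - prm γ 0 w) + (36 * B + 24) := by
  have hγ := hcon.1
  set Ee := η (ζ 0) - η (γ 0) with hEe
  have hq := q_calib hcon hB hγη hζη hζgeo hgt t le_rfl
  have h1 : infDist w (ζ '' Set.Ici t) ≤ dist w (ζ t) :=
    infDist_le_dist_of_mem ⟨t, mem_Ici.2 le_rfl, rfl⟩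
  have h2 : dist w (ζ t) ≤ dist w (γ (prm γ 0 w))
      + dist (γ (prm γ 0 w)) (γ (prm γ 0 (ζ t))) + dist (γ (prm γ 0 (ζ t))) (ζ t) :=
    dist_triangle4 _ _ _ _
  have e1 : dist w (γ (prm γ 0 w)) = infDist w (γ '' Set.Ici 0) := (prm_spec hγ w).2
  have e2 : dist (γ (prm γ 0 w)) (γ (prm γ 0 (ζ t))) = |prm γ 0 w - prm γ 0 (ζ t)| :=
    geo_dist hγ (prm_spec hγ w).1 (prm_spec hγ (ζ t)).1
  have e3 : dist (γ (prm γ 0 (ζ t))) (ζ t) = infDist (ζ t) (γ '' Set.Ici 0) := by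
    rw [dist_comm]; exact (prm_spec hγ (ζ t)).2
  rw [e1, e2, e3] at h2
  have habs := abs_le.1 hq
  have h3 : |prm γ 0 w - prm γ 0 (ζ t)| ≤ ((t - Ee) - prm γ 0 w) + (18 * B + 12) := by
    rw [abs_le]
    constructor <;> [linarith [habs.2]; linarith [habs.1]]
  linarith

/-- Two-step projection comparison. -/
lemma two_step (hcon : ContractingOn B γ (Set.Ici 0)) (hB : 0 < B) {p w' : X} {cc : ℝ}
    (hcc : 0 ≤ cc) (hd : dist p w' ≤ infDist p (γ '' Set.Ici 0) + cc) :
    |prm γ 0 p - prm γ 0 w'| ≤ 3 * B + 2 * cc + 4 * min B 1 := by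
  have hγ := hcon.1
  set m := min B 1 with hmdef
  have hm : 0 < m := lt_min hB one_pos
  by_cases h1 : dist p w' ≤ infDist p (γ '' Set.Ici 0) - m
  · have := ball_jump hcon hB hm h1
    linarith
  · push_neg at h1
    by_cases h2 : infDist p (γ '' Set.Ici 0) ≤ m
    · have htt := tail_trick hcon hB p w'
      have : dist p w' ≤ m + cc := by linarith
      linarith
    · push_neg at h2
      obtain ⟨σp, hσ0, hσd, hσiso⟩ := CAT0Space.exists_geodesic p w'
      set par := infDist p (γ '' Set.Ici 0) - m with hpar
      have hpar0 : 0 ≤ par := by simp only [hpar]; linarith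
      have hparD : par ≤ dist p w' := by simp only [hpar]; linarith
      set w₁ := σp par with hw₁
      have hpw₁ : dist p w₁ = par := by
        have := hσiso 0 ⟨le_rfl, dist_nonneg⟩ par ⟨hpar0, hparD⟩
        rw [hσ0] at this
        rw [this, abs_of_nonpos (by linarith)]; ring
      have hw₁w' : dist w₁ w' = dist p w' - par := by
        have := hσiso par ⟨hpar0, hparD⟩ (dist p w') ⟨dist_nonneg, le_rfl⟩
        rw [hσd] at this
        rw [this, abs_of_nonpos (by linarith)]; ring
      have hjump : |prm γ 0 p - prm γ 0 w₁| ≤ B :=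
        ball_jump hcon hB hm (by rw [hpw₁])
      have htt := tail_trick hcon hB w₁ w'
      have hsm : dist w₁ w' ≤ cc + m := by
        rw [hw₁w']; simp only [hpar]; linarith
      have htri := abs_sub_le (prm γ 0 p) (prm γ 0 w₁) (prm γ 0 w')
      linarith

/-- Crossing estimate: the `γ`-projection of a point of a ball avoiding `ζ[t,∞)`,
whose center projects below `u_t`, cannot project far above `u_t`. -/
lemma crossing (hcon : ContractingOn B γ (Set.Ici 0)) (hB : 0 < B)
    (hγη : EndsAt o γ η) (hζη : EndsAt o ζ η) (hζgeo : GeodesicOn ζ Set.univ)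
    {t : ℝ} (hgt : infDist (ζ t) (γ '' Set.Ici 0) ≤ 9 * B + 6) {z w : X}
    (hzw : dist z w ≤ infDist z (ζ '' Set.Ici t))
    (haz : prm γ 0 z ≤ t - (η (ζ 0) - η (γ 0))) :
    prm γ 0 w - (t - (η (ζ 0) - η (γ 0))) ≤ 77 * B + 58 := by
  have hγ := hcon.1
  set m := min B 1 with hmdef
  have hm : 0 < m := lt_min hB one_pos
  have hmB : m ≤ B := min_le_left _ _
  have hm1 : m ≤ 1 := min_le_right _ _
  set Ee := η (ζ 0) - η (γ 0) with hEe
  set L := dist z w with hL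
  obtain ⟨σp, hσ0, hσd, hσiso⟩ := CAT0Space.exists_geodesic z w
  set S := Set.Icc (0:ℝ) L ∩ {τ | prm γ 0 (σp τ) ≤ t - Ee} with hSdef
  have h0S : (0:ℝ) ∈ S := by
    refine ⟨⟨le_rfl, dist_nonneg⟩, ?_⟩
    simp only [Set.mem_setOf_eq, hσ0]
    exact haz
  have hbdd : BddAbove S := ⟨L, fun τ hτ => hτ.1.2⟩
  set τs := sSup S with hτs
  have hτs0 : 0 ≤ τs := le_csSup hbdd h0S
  have hτsL : τs ≤ L := csSup_le ⟨0, h0S⟩ fun τ hτ => hτ.1.2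
  obtain ⟨τ, hτS, hττ⟩ := exists_lt_of_lt_csSup ⟨0, h0S⟩ (show τs - m < sSup S by linarith)
  have hτ0 : 0 ≤ τ := hτS.1.1
  have hτL : τ ≤ L := hτS.1.2
  have hτle : τ ≤ τs := le_csSup hbdd hτS
  by_cases hend : L - τs ≤ m
  · -- τ is within 2m of the end
    have hdτw : dist (σp τ) w = L - τ := by
      have := hσiso τ ⟨hτ0, hτL⟩ L ⟨dist_nonneg, le_rfl⟩
      rw [hσd] at this
      rw [this, abs_of_nonpos (by linarith)]; ring
    have htt := tail_trick hcon hB (σp τ) w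
    rw [hdτw] at htt
    have hqτ : prm γ 0 (σp τ) ≤ t - Ee := hτS.2
    have habs := abs_le.1 htt
    linarith [habs.1]
  · push_neg at hend
    set p := σp (τs + m) with hp
    have hmem : τs + m ∈ Set.Icc (0:ℝ) L := ⟨by linarith, by linarith⟩
    have hnotS : ¬ prm γ 0 p ≤ t - Ee := by
      intro hcontra
      have : τs + m ∈ S := ⟨hmem, hcontra⟩
      have := le_csSup hbdd this
      linarith
    push_neg at hnotS
    have hdτp : dist (σp τ) p = τs + m - τ := by
      have := hσiso τ ⟨hτ0, hτL⟩ (τs + m) hmem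
      rw [this, abs_of_nonpos (by linarith)]; ring
    have htt := tail_trick hcon hB (σp τ) p
    rw [hdτp] at htt
    have hqτ : prm γ 0 (σp τ) ≤ t - Ee := hτS.2
    have habs := abs_le.1 htt
    have hap : prm γ 0 p ≤ t - Ee + (2 * B + 6 * m) := by linarith [habs.1]
    have hdzp : dist z p = τs + m := by
      have := hσiso 0 ⟨le_rfl, dist_nonneg⟩ (τs + m) hmem
      rw [hσ0] at this
      rw [this, abs_of_nonpos (by linarith)]; ring
    have hdpw : dist p w = L - (τs + m) := by
      have := hσiso (τs + m) hmem L ⟨dist_nonneg, le_rfl⟩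
      rw [hσd] at this
      rw [this, abs_of_nonpos (by linarith)]; ring
    have hpZ : dist p w ≤ infDist p (ζ '' Set.Ici t) := by
      have hlipZ := infDist_le_infDist_add_dist (x := z) (y := p) (s := ζ '' Set.Ici t)
      rw [hdpw]
      rw [hdzp] at hlipZ
      linarith
    have hU := U1 hcon hB hγη hζη hζgeo hgt (w := p) hnotS.le
    have hfar : dist p w ≤ infDist p (γ '' Set.Ici 0) + (36 * B + 24) :=
      le_trans hpZ hU
    have htwo := two_step hcon hB (by positivity) hfar
    have habs2 := abs_le.1 htwo
    linarith [habs2.1]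

/-- The `ζ[t,∞)`-projection parameter is `t + (a_w − u_t)⁺` up to `O(B)`. -/
lemma starstar (hcon : ContractingOn B γ (Set.Ici 0)) (hB : 0 < B)
    (hγη : EndsAt o γ η) (hζη : EndsAt o ζ η) (hζgeo : GeodesicOn ζ Set.univ)
    {t : ℝ} (hgt : infDist (ζ t) (γ '' Set.Ici 0) ≤ 9 * B + 6) (w : X) :
    |prm ζ t w - t - max (prm γ 0 w - (t - (η (ζ 0) - η (γ 0)))) 0| ≤ 74 * B + 50 := by
  have hγ := hcon.1
  have hZgeo : GeodesicOn ζ (Set.Ici t) := geodesicOn_mono hζgeo (subset_univ _)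
  set m := min B 1 with hmdef
  have hm : 0 < m := lt_min hB one_pos
  have hmB : m ≤ B := min_le_left _ _
  have hm1 : m ≤ 1 := min_le_right _ _
  set Ee := η (ζ 0) - η (γ 0) with hEe
  set sw := prm ζ t w with hsw
  have hswt : t ≤ sw := (prm_spec hZgeo w).1
  have hq := q_calib hcon hB hγη hζη hζgeo hgt sw hswt
  have hg := g_glob hcon hB hγη hζη hζgeo hgt sw hswt
  have hdw : dist w (ζ sw) = infDist w (ζ '' Set.Ici t) := (prm_spec hZgeo w).2
  -- L1 estimate
  have hL := L1 hcon hB w (prm_spec hγ (ζ sw)).1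
  have htri : dist w (γ (prm γ 0 (ζ sw))) ≤
      infDist w (ζ '' Set.Ici t) + infDist (ζ sw) (γ '' Set.Ici 0) := by
    have h5 := dist_triangle w (ζ sw) (γ (prm γ 0 (ζ sw)))
    rw [hdw] at h5
    rw [(prm_spec hγ (ζ sw)).2] at h5
    exact h5
  have habsq := abs_le.1 hq
  rcases le_total (t - Ee) (prm γ 0 w) with hcase | hcase
  · -- high case
    have hmax : max (prm γ 0 w - (t - Ee)) 0 = prm γ 0 w - (t - Ee) :=
      max_eq_left (by linarith)
    have hU := U1 hcon hB hγη hζη hζgeo hgt (w := w) hcase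
    have hqa : |prm γ 0 w - prm γ 0 (ζ sw)| ≤
        (36 * B + 24) + (18 * B + 12) + 2 * B + 2 * m := by
      have := abs_le.1 hL
      rw [abs_le]
      constructor <;>
        [linarith [this.1, htri, hU, hg]; linarith [this.2, htri, hU, hg]]
    have habsqa := abs_le.1 hqa
    rw [hmax, abs_le]
    constructor <;>
      [linarith [habsq.1, habsqa.1]; linarith [habsq.2, habsqa.2]]
  · -- low case
    have hmax : max (prm γ 0 w - (t - Ee)) 0 = 0 := max_eq_right (by linarith)
    have hU := U2 hcon hB hγη hζη hζgeo hgt (w := w) hcase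
    have hqa : prm γ 0 (ζ sw) ≤ (t - Ee) +
        ((36 * B + 24) + (18 * B + 12) + 2 * B + 2 * m) := by
      have h6 := (abs_le.1 hL).1
      linarith [htri, hU, hg]
    rw [hmax, abs_le]
    constructor
    · linarith
    · linarith [habsq.2]

end Part2

section Final

variable {o : X} {B : ℝ} {γ ζ : ℝ → X} {η : C(X, ℝ)}

lemma pospart_pair (hcon : ContractingOn B γ (Set.Ici 0)) (hB : 0 < B)
    (hγη : EndsAt o γ η) (hζη : EndsAt o ζ η) (hζgeo : GeodesicOn ζ Set.univ)
    {t : ℝ} (hgt : infDist (ζ t) (γ '' Set.Ici 0) ≤ 9 * B + 6) {z w : X}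
    (hzw : dist z w ≤ infDist z (ζ '' Set.Ici t)) :
    |max (prm γ 0 w - (t - (η (ζ 0) - η (γ 0)))) 0
      - max (prm γ 0 z - (t - (η (ζ 0) - η (γ 0)))) 0| ≤ 77 * B + 58 := by
  set m := min B 1 with hmdef
  have hm : 0 < m := lt_min hB one_pos
  have hmB : m ≤ B := min_le_left _ _
  have hm1 : m ≤ 1 := min_le_right _ _
  set Ee := η (ζ 0) - η (γ 0) with hEe
  rcases le_total (t - Ee) (prm γ 0 z) with hcase | hcase
  · have hU := U1 hcon hB hγη hζη hζgeo hgt (w := z) hcase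
    have hd : dist z w ≤ infDist z (γ '' Set.Ici 0) + (36 * B + 24) := le_trans hzw hU
    have htwo := two_step hcon hB (cc := 36 * B + 24) (by positivity) hd
    have hlip := abs_max_sub_max_le_abs (prm γ 0 w - (t - Ee)) (prm γ 0 z - (t - Ee)) 0
    have heq : prm γ 0 w - (t - Ee) - (prm γ 0 z - (t - Ee)) = prm γ 0 w - prm γ 0 z := by
      ring
    rw [heq] at hlip
    rw [abs_sub_comm] at htwo
    linarith
  · have hmaxz : max (prm γ 0 z - (t - Ee)) 0 = 0 := max_eq_right (by linarith)
    rw [hmaxz, sub_zero]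
    rcases le_total (prm γ 0 w) (t - Ee) with hw | hw
    · rw [max_eq_right (by linarith), abs_zero]
      positivity
    · rw [max_eq_left (by linarith)]
      have hcr := crossing hcon hB hγη hζη hζgeo hgt hzw hcase
      rw [abs_of_nonneg (by linarith)]
      exact hcr

/-- Part 2: the ray `ζ[t,∞)` is `C`-contracting. -/
lemma part2 (hcon : ContractingOn B γ (Set.Ici 0)) (hB : 0 < B)
    (hγη : EndsAt o γ η) (hζη : EndsAt o ζ η) (hζgeo : GeodesicOn ζ Set.univ)
    {t : ℝ} (hgt : infDist (ζ t) (γ '' Set.Ici 0) ≤ 9 * B + 6) :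
    ContractingOn (1000 * B + 1000) ζ (Set.Ici t) := by
  have hZgeo : GeodesicOn ζ (Set.Ici t) := geodesicOn_mono hζgeo (subset_univ _)
  refine ⟨hZgeo, ?_⟩
  intro z r hdisj
  refine EMetric.diam_le ?_
  intro p₁ hp₁ p₂ hp₂
  rw [Set.mem_iUnion₂] at hp₁ hp₂
  obtain ⟨w₁, hw₁, hproj₁⟩ := hp₁
  obtain ⟨w₂, hw₂, hproj₂⟩ := hp₂
  have hrZ : ∀ w ∈ Metric.closedBall z r, dist z w ≤ infDist z (ζ '' Set.Ici t) := by
    intro w hw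
    have hr : r ≤ infDist z (ζ '' Set.Ici t) := by
      by_contra hcontra
      push_neg at hcontra
      obtain ⟨y, hyZ, hyd⟩ := (infDist_lt_iff (ray_nonempty ζ t)).1 hcontra
      exact (Set.disjoint_right.1 hdisj hyZ) (by rw [mem_closedBall, dist_comm]; exact hyd.le)
    have h9 := mem_closedBall.1 hw
    rw [dist_comm]
    linarith
  have e₁ : p₁ = ζ (prm ζ t w₁) := projSet_eq_prm hZgeo hproj₁
  have e₂ : p₂ = ζ (prm ζ t w₂) := projSet_eq_prm hZgeo hproj₂
  rw [e₁, e₂, edist_dist]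
  refine ENNReal.ofReal_le_ofReal ?_
  rw [geo_dist hZgeo (prm_spec hZgeo w₁).1 (prm_spec hZgeo w₂).1]
  have k₁ := abs_le.1 (starstar hcon hB hγη hζη hζgeo hgt w₁)
  have k₂ := abs_le.1 (starstar hcon hB hγη hζη hζgeo hgt w₂)
  have pp₁ := abs_le.1 (pospart_pair hcon hB hγη hζη hζgeo hgt (hrZ w₁ hw₁))
  have pp₂ := abs_le.1 (pospart_pair hcon hB hγη hζη hζgeo hgt (hrZ w₂ hw₂))
  rw [abs_le]
  constructor
  · linarith [k₁.1, k₂.2, pp₁.1, pp₂.2]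
  · linarith [k₁.2, k₂.1, pp₁.2, pp₂.1]

end Final

end LocalRay

end Dev

/-- Lemma `localray`. For every `B > 0` there is `C = C(B) > B` such that
for every `B`-contracting ray `γ : [0,∞) → X` in a proper CAT(0)-space and every boundary
point `ξ ≠ γ(∞)`, every geodesic `ζ` connecting `ξ` to `γ(∞)` passes through the
`(9B+6)`-neighborhood of every point `x ∈ π_{γ[0,∞)}(ξ)`, and if `d(ζ(t), x) ≤ 9B+6` then
the ray `ζ[t,∞)` is `C`-contracting. -/
theorem contracting_ray_projection_and_contraction :
    ∀ B : ℝ, 0 < B → ∃ C : ℝ, B < C ∧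
      ∀ (X : Type) [MetricSpace X] [ProperSpace X] [CAT0Space X],
        ∀ (o : X) (γ : ℝ → X), ContractingOn B γ (Set.Ici 0) →
        ∀ ξ η : C(X, ℝ), EndsAt o γ η → ξ ∈ bdry o → ξ ≠ η →
        ∀ ζ : ℝ → X, GeodesicOn ζ Set.univ → BeginsAt o ζ ξ → EndsAt o ζ η →
        ∀ x ∈ projSetBdry γ (Set.Ici 0) ξ,
          (∃ t : ℝ, dist (ζ t) x ≤ 9 * B + 6) ∧
          ∀ t : ℝ, dist (ζ t) x ≤ 9 * B + 6 → ContractingOn C ζ (Set.Ici t) := by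
  intro B hB
  refine ⟨1000 * B + 1000, by linarith, ?_⟩
  intro X _ _ _ o γ hcon ξ η hγη hξbd hξη ζ hζgeo hζξ hζη x hx
  obtain ⟨t₀, ht₀, hxeq, hmin⟩ := hx
  have ht₀' : (0:ℝ) ≤ t₀ := ht₀
  constructor
  · obtain ⟨t, ht⟩ := LocalRay.part1 hcon hB hγη hζη hζgeo hζξ ht₀'
      (fun s hs => hmin s hs)
    exact ⟨t, by rw [hxeq]; exact ht⟩
  · intro t ht
    rw [hxeq] at ht
    have hgt : Metric.infDist (ζ t) (γ '' Set.Ici 0) ≤ 9 * B + 6 :=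
      le_trans (Metric.infDist_le_dist_of_mem ⟨t₀, ht₀, rfl⟩) ht
    exact LocalRay.part2 hcon hB hγη hζη hζgeo hgt

end
end

section
/- For any two oriented geodesics ζ₁, ζ₂ in a proper CAT(0)-space X which share at most one endpoint in ∂X, and any x ∈ X, the function τ_B satisfies: (1) τ_B(x, ζ₁, ζ₂) = τ_B(x, ζ₂, ζ₁); (2) if ζ̂_i denotes the geodesic obtained from ζ_i by reversing the orientation, then τ_B(x, ζ̂₁, ζ̂₂) = τ_B(x, ζ₁, ζ₂); (3) τ_B(x, ζ₁, ζ₂) ≤ τ_B(y, ζ₁, ζ₂) + d(x, y) for all x, y ∈ X. -/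
open Metric Set Filter Topology
open scoped ENNReal Classical Pointwise

noncomputable section

universe u

variable {X : Type u} [MetricSpace X]

/-! ### Auxiliary lemmas for Statement 8 -/
section TauBAux
set_option linter.unusedSectionVars false
variable {X : Type u} [MetricSpace X] [CAT0Space X]

/-- Four-point inequality. -/
lemma four_point (a b c d : X) :
    dist a c ^ 2 + dist b d ^ 2 ≤
      dist a b ^ 2 + dist b c ^ 2 + dist c d ^ 2 + dist d a ^ 2 := by
  obtain ⟨γ, h0, h1, hg⟩ := CAT0Space.exists_geodesic b d
  set m := γ (dist b d / 2) with hm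
  have hbd : (0:ℝ) ≤ dist b d := dist_nonneg
  have hm0 : dist b m = dist b d / 2 := by
    have := hg 0 ⟨le_rfl, hbd⟩ (dist b d / 2) ⟨by linarith, by linarith⟩
    rw [h0] at this
    rw [hm, this, abs_of_nonpos (by linarith)]; ring
  have hm1 : dist d m = dist b d / 2 := by
    have := hg (dist b d) ⟨hbd, le_rfl⟩ (dist b d / 2) ⟨by linarith, by linarith⟩
    rw [h1] at this
    rw [hm, this, abs_of_nonneg (by linarith)]; ring
  have h2 := CAT0Space.cn_ineq a b d m hm0 hm1
  have h3 := CAT0Space.cn_ineq c b d m hm0 hm1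
  have h4 : dist a c ≤ dist a m + dist c m := by
    rw [dist_comm c m]; exact dist_triangle _ _ _
  have h5 : dist a c ^ 2 ≤ 2 * dist a m ^ 2 + 2 * dist c m ^ 2 := by
    nlinarith [sq_nonneg (dist a m - dist c m), dist_nonneg (x := a) (y := c),
      dist_nonneg (x := a) (y := m), dist_nonneg (x := c) (y := m)]
  have h6 : dist d a ^ 2 = dist a d ^ 2 := by rw [dist_comm]
  have h7 : dist c d ^ 2 = dist d c ^ 2 := by rw [dist_comm]
  have h8 : dist b c ^ 2 = dist c b ^ 2 := by rw [dist_comm]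
  linarith [h2, h3, h5]

/-- Midpoint CN inequality along a geodesic. -/
lemma midpoint_cn {γ : ℝ → X} {J : Set ℝ} (hγ : GeodesicOn γ J) {a b : ℝ}
    (ha : a ∈ J) (hb : b ∈ J) (hm : (a + b) / 2 ∈ J) (x : X) :
    dist x (γ ((a + b) / 2)) ^ 2 ≤
      dist x (γ a) ^ 2 / 2 + dist x (γ b) ^ 2 / 2 - (b - a) ^ 2 / 4 := by
  have e1 : dist (γ a) (γ b) = |a - b| := hγ a ha b hb
  have e2 : dist (γ a) (γ ((a + b) / 2)) = dist (γ a) (γ b) / 2 := by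
    rw [hγ a ha _ hm, e1, show a - (a + b) / 2 = (a - b) / 2 by ring, abs_div]
    norm_num
  have e3 : dist (γ b) (γ ((a + b) / 2)) = dist (γ a) (γ b) / 2 := by
    rw [hγ b hb _ hm, e1, show b - (a + b) / 2 = -((a - b) / 2) by ring, abs_neg,
      abs_div]
    norm_num
  have hcn := CAT0Space.cn_ineq x (γ a) (γ b) (γ ((a + b) / 2)) e2 e3
  have e4 : dist (γ a) (γ b) ^ 2 = (b - a) ^ 2 := by
    rw [e1, sq_abs]; ring
  linarith [e4 ▸ hcn]

/-- Strong Pythagoras for a minimizing parameter. -/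
lemma pythagoras {γ : ℝ → X} {J : Set ℝ} (hγ : GeodesicOn γ J) (ho : J.OrdConnected)
    {s t : ℝ} (hs : s ∈ J) (ht : t ∈ J) (x : X)
    (hmin : ∀ v ∈ J, dist x (γ s) ≤ dist x (γ v)) :
    dist x (γ s) ^ 2 + (t - s) ^ 2 ≤ dist x (γ t) ^ 2 := by
  have hmem : ∀ n : ℕ, s + (t - s) / 2 ^ n ∈ J := by
    intro n
    have h2n : (1:ℝ) ≤ 2 ^ n := one_le_pow₀ (by norm_num)
    apply ho.uIcc_subset hs ht
    rcases le_total s t with h | h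
    · have h1 : (0:ℝ) ≤ (t - s) / 2 ^ n := div_nonneg (by linarith) (by positivity)
      have hd : (t - s) / 2 ^ n ≤ t - s := div_le_self (by linarith) h2n
      exact Set.mem_uIcc.2 (Or.inl ⟨by linarith, by linarith⟩)
    · have h1 : (t - s) / 2 ^ n ≤ 0 :=
        div_nonpos_of_nonpos_of_nonneg (by linarith) (by positivity)
      have hd : t - s ≤ (t - s) / 2 ^ n := by
        rw [le_div_iff₀ (by positivity : (0:ℝ) < 2 ^ n)]
        nlinarith
      exact Set.mem_uIcc.2 (Or.inr ⟨by linarith, by linarith⟩)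
  have key : ∀ n : ℕ,
      dist x (γ (s + (t - s) / 2 ^ n)) ^ 2 - dist x (γ s) ^ 2 - ((t - s) / 2 ^ n) ^ 2 ≤
        (dist x (γ t) ^ 2 - dist x (γ s) ^ 2 - (t - s) ^ 2) / 2 ^ n := by
    intro n
    induction n with
    | zero => simp
    | succ n ih =>
      have humem := hmem n
      have hud : s + (t - s) / 2 ^ (n + 1) = (s + (s + (t - s) / 2 ^ n)) / 2 := by
        rw [pow_succ]; field_simp; ring
      have hmmem : (s + (s + (t - s) / 2 ^ n)) / 2 ∈ J := by
        rw [← hud]; exact hmem (n + 1)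
      have hmid := midpoint_cn hγ hs humem hmmem x
      have huv : (s + (t - s) / 2 ^ n) - s = (t - s) / 2 ^ n := by ring
      rw [huv] at hmid
      have hq : ((t - s) / 2 ^ (n + 1)) ^ 2 = ((t - s) / 2 ^ n) ^ 2 / 4 := by
        rw [pow_succ]; field_simp; ring
      have h2npos : (0:ℝ) < 2 ^ n := by positivity
      rw [hud, hq]
      have hhalf : ((dist x (γ t) ^ 2 - dist x (γ s) ^ 2 - (t - s) ^ 2) / 2 ^ n) / 2 =
          (dist x (γ t) ^ 2 - dist x (γ s) ^ 2 - (t - s) ^ 2) / 2 ^ (n + 1) := by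
        rw [pow_succ]; ring
      linarith
  by_contra hcon
  push_neg at hcon
  have hHneg : dist x (γ t) ^ 2 - dist x (γ s) ^ 2 - (t - s) ^ 2 < 0 := by linarith
  set H := dist x (γ t) ^ 2 - dist x (γ s) ^ 2 - (t - s) ^ 2 with hH
  obtain ⟨n, hn⟩ := pow_unbounded_of_one_lt ((t - s) ^ 2 / (-H)) (by norm_num : (1:ℝ) < 2)
  have h2n : (0:ℝ) < 2 ^ n := by positivity
  have hlow : -(((t - s) / 2 ^ n) ^ 2) ≤
      dist x (γ (s + (t - s) / 2 ^ n)) ^ 2 - dist x (γ s) ^ 2 - ((t - s) / 2 ^ n) ^ 2 := by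
    have := hmin _ (hmem n)
    nlinarith [dist_nonneg (x := x) (y := γ s)]
  have hchain := hlow.trans (key n)
  rw [div_pow, ← neg_div] at hchain
  rw [div_le_div_iff₀ (by positivity) h2n] at hchain
  rw [div_lt_iff₀ (by linarith : (0:ℝ) < -H)] at hn
  have := mul_lt_mul_of_pos_right hn h2n
  nlinarith [hchain, this]

/-- Minimizing parameters move 1-Lipschitz-ly with the point. -/
lemma param_lipschitz {γ : ℝ → X} {J : Set ℝ} (hγ : GeodesicOn γ J)
    (ho : J.OrdConnected) {s t : ℝ} (hs : s ∈ J) (ht : t ∈ J) {x y : X}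
    (hx : ∀ v ∈ J, dist x (γ s) ≤ dist x (γ v))
    (hy : ∀ v ∈ J, dist y (γ t) ≤ dist y (γ v)) :
    |s - t| ≤ dist x y := by
  have p1 := pythagoras hγ ho hs ht x hx
  have p2 := pythagoras hγ ho ht hs y hy
  have fp := four_point (γ s) x y (γ t)
  have hts : dist (γ t) (γ s) ^ 2 = (t - s) ^ 2 := by
    rw [hγ t ht s hs, sq_abs]
  have c1 : dist (γ s) x ^ 2 = dist x (γ s) ^ 2 := by rw [dist_comm]
  have c2 : dist (γ s) y ^ 2 = dist y (γ s) ^ 2 := by rw [dist_comm]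
  have c3 : dist y (γ t) ^ 2 = dist y (γ t) ^ 2 := rfl
  have key : (s - t) ^ 2 ≤ dist x y ^ 2 := by nlinarith [p1, p2, fp]
  have : |s - t| ^ 2 ≤ dist x y ^ 2 := by rw [sq_abs]; exact key
  nlinarith [abs_nonneg (s - t), dist_nonneg (x := x) (y := y)]

/-- Existence of a closest parameter. -/
lemma exists_min_param {γ : ℝ → X} {J : Set ℝ} (hγ : GeodesicOn γ J)
    (hc : IsClosed J) (hne : J.Nonempty) (x : X) :
    ∃ s ∈ J, ∀ v ∈ J, dist x (γ s) ≤ dist x (γ v) := by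
  obtain ⟨t₀, ht₀⟩ := hne
  set M := 2 * dist x (γ t₀) + 1 with hM
  set K := J ∩ Set.Icc (t₀ - M) (t₀ + M) with hK
  have hKc : IsCompact K := (isCompact_Icc).inter_left hc
  have ht₀K : t₀ ∈ K := by
    refine ⟨ht₀, ?_, ?_⟩ <;> simp only [hM] <;>
      linarith [dist_nonneg (x := x) (y := γ t₀)]
  have hKne : K.Nonempty := ⟨t₀, ht₀K⟩
  have hcont : ContinuousOn (fun v => dist x (γ v)) K := by
    have : LipschitzOnWith 1 (fun v => dist x (γ v)) J := by
      intro a ha b hb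
      rw [edist_dist, edist_dist, ENNReal.coe_one, one_mul]
      apply ENNReal.ofReal_le_ofReal
      calc dist (dist x (γ a)) (dist x (γ b)) ≤ dist (γ a) (γ b) :=
            dist_dist_dist_le_right _ _ _
        _ = |a - b| := hγ a ha b hb
        _ = dist a b := (Real.dist_eq a b).symm
    exact (this.mono (by rw [hK]; exact Set.inter_subset_left)).continuousOn
  obtain ⟨s, hsK, hsmin⟩ := hKc.exists_isMinOn hKne hcont
  refine ⟨s, hsK.1, fun v hv => ?_⟩
  rcases le_or_gt (dist x (γ v)) (dist x (γ t₀)) with h | h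
  · -- then v ∈ K
    have : v ∈ K := by
      refine ⟨hv, ?_, ?_⟩ <;>
      · have hd : dist (γ t₀) (γ v) ≤ dist (γ t₀) x + dist x (γ v) := dist_triangle _ _ _
        rw [dist_comm (γ t₀) x] at hd
        have := hγ t₀ ht₀ v hv
        rw [this] at hd
        have := abs_le.1 (by linarith [dist_nonneg (x := x) (y := γ t₀)] :
          |t₀ - v| ≤ M)
        simp only [hM] at *
        linarith [this.1, this.2]
    exact hsmin this
  · exact le_trans (hsmin ht₀K) (le_of_lt h)

/-- Characterization of `projParam` via a minimizer. -/
lemma projParam_eq {γ : ℝ → X} {J : Set ℝ} (hγ : GeodesicOn γ J)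
    (ho : J.OrdConnected) {x : X} {u : ℝ} (hu : u ∈ J)
    (hmin : ∀ v ∈ J, dist x (γ u) ≤ dist x (γ v)) :
    projParam γ J x = u := by
  have hinf : Metric.infDist x (γ '' J) = dist x (γ u) := by
    refine le_antisymm (Metric.infDist_le_dist_of_mem ⟨u, hu, rfl⟩) ?_
    haveI : Nonempty ↑(γ '' J) := ⟨⟨γ u, u, hu, rfl⟩⟩
    rw [Metric.infDist_eq_iInf]
    refine le_ciInf fun y => ?_
    obtain ⟨v, hv, hvy⟩ := y.2
    rw [← hvy]
    exact hmin v hv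
  have hset : {t | t ∈ J ∧ dist x (γ t) = Metric.infDist x (γ '' J)} = {u} := by
    ext w
    simp only [Set.mem_setOf_eq, Set.mem_singleton_iff]
    constructor
    · rintro ⟨hw, hwd⟩
      have hwmin : ∀ v ∈ J, dist x (γ w) ≤ dist x (γ v) := fun v hv => by
        rw [hwd]; exact Metric.infDist_le_dist_of_mem ⟨v, hv, rfl⟩
      have := param_lipschitz hγ ho hw hu hwmin hmin (x := x) (y := x)
      rw [dist_self] at this
      have h0 : |w - u| = 0 := le_antisymm this (abs_nonneg _)
      have := abs_eq_zero.1 h0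
      linarith
    · rintro rfl
      exact ⟨hu, hinf.symm ▸ rfl⟩
  rw [projParam, hset, csInf_singleton]

/-- All the properties of the projection parameter. -/
lemma projParam_spec {γ : ℝ → X} {J : Set ℝ} (hγ : GeodesicOn γ J)
    (hc : IsClosed J) (ho : J.OrdConnected) (hne : J.Nonempty) (x : X) :
    projParam γ J x ∈ J ∧ ∀ v ∈ J, dist x (γ (projParam γ J x)) ≤ dist x (γ v) := by
  obtain ⟨s, hs, hmin⟩ := exists_min_param hγ hc hne x
  rw [projParam_eq hγ ho hs hmin]
  exact ⟨hs, hmin⟩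

/-- Lipschitz continuity of the projection parameter. -/
lemma projParam_lipschitz {γ : ℝ → X} {J : Set ℝ} (hγ : GeodesicOn γ J)
    (hc : IsClosed J) (ho : J.OrdConnected) (hne : J.Nonempty) (x y : X) :
    |projParam γ J x - projParam γ J y| ≤ dist x y := by
  obtain ⟨hx1, hx2⟩ := projParam_spec hγ hc ho hne x
  obtain ⟨hy1, hy2⟩ := projParam_spec hγ hc ho hne y
  exact param_lipschitz hγ ho hx1 hy1 hx2 hy2

lemma geodesicOn_neg {γ : ℝ → X} {J : Set ℝ} (hγ : GeodesicOn γ J) :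
    GeodesicOn (fun t => γ (-t)) ((fun t : ℝ => -t) '' J) := by
  rintro s ⟨s', hs', rfl⟩ t ⟨t', ht', rfl⟩
  simp only [neg_neg]
  rw [hγ s' hs' t' ht']
  rw [show -s' - -t' = -(s' - t') by ring, abs_neg]

lemma ordConnected_neg {J : Set ℝ} (ho : J.OrdConnected) :
    ((fun t : ℝ => -t) '' J).OrdConnected := by
  constructor
  rintro a ⟨a', ha', rfl⟩ b ⟨b', hb', rfl⟩ z hz
  simp only [Set.mem_Icc] at hz
  refine ⟨-z, ?_, by simp⟩
  have : -z ∈ Set.Icc b' a' := ⟨by linarith [hz.2], by linarith [hz.1]⟩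
  exact ho.out hb' ha' this

lemma isClosed_neg_image {J : Set ℝ} (hc : IsClosed J) :
    IsClosed ((fun t : ℝ => -t) '' J) := by
  have : (fun t : ℝ => -t) '' J = (Homeomorph.neg ℝ) '' J := rfl
  rw [this, Homeomorph.isClosed_image]
  exact hc

/-- Reversal of projParam. -/
lemma projParam_neg {γ : ℝ → X} {J : Set ℝ} (hγ : GeodesicOn γ J)
    (hc : IsClosed J) (ho : J.OrdConnected) (x : X) :
    projParam (fun t => γ (-t)) ((fun t : ℝ => -t) '' J) x = -projParam γ J x := by
  rcases J.eq_empty_or_nonempty with rfl | hne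
  · have he : ∀ f : ℝ → X, projParam f (∅ : Set ℝ) x = 0 := by
      intro f
      rw [projParam, show {t | t ∈ (∅ : Set ℝ) ∧
        dist x (f t) = Metric.infDist x (f '' (∅ : Set ℝ))} = (∅ : Set ℝ) from by ext t; simp,
        Real.sInf_empty]
    rw [Set.image_empty, he, he, neg_zero]
  · obtain ⟨hmem, hmin⟩ := projParam_spec hγ hc ho hne x
    apply projParam_eq (geodesicOn_neg hγ) (ordConnected_neg ho)
      ⟨projParam γ J x, hmem, rfl⟩
    rintro v ⟨v', hv', rfl⟩
    simp only [neg_neg]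
    exact hmin v' hv'

lemma nearSet_neg (B : ℝ) (ζ₁ : ℝ → X) (J₁ : Set ℝ) (ζ₂ : ℝ → X) (J₂ : Set ℝ) :
    nearSet B (fun t => ζ₁ (-t)) ((fun t : ℝ => -t) '' J₁)
      (fun t => ζ₂ (-t)) ((fun t : ℝ => -t) '' J₂) = -(nearSet B ζ₁ J₁ ζ₂ J₂) := by
  have himg : (fun t => ζ₂ (-t)) '' ((fun t : ℝ => -t) '' J₂) = ζ₂ '' J₂ := by
    rw [Set.image_image]; simp
  have hmem : ∀ t : ℝ, t ∈ (fun t : ℝ => -t) '' J₁ ↔ -t ∈ J₁ := fun t =>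
    ⟨fun ⟨u, hu, hut⟩ => by rw [← hut]; simpa, fun h => ⟨-t, h, by simp⟩⟩
  ext t
  simp only [nearSet, Set.mem_setOf_eq, Set.mem_neg, himg, hmem]

lemma real_sInf_neg (s : Set ℝ) : sInf (-s) = -sSup s := by
  rw [Real.sInf_def, neg_neg]

lemma real_sSup_neg (s : Set ℝ) : sSup (-s) = -sInf s := by
  rw [Real.sInf_def, neg_neg]

lemma ite_neg_bot (c : Prop) [Decidable c] (a : EReal) :
    (if c then -a else (⊥ : EReal)) = -(if c then a else ⊤) := by
  split <;> simp

lemma ite_neg_top (c : Prop) [Decidable c] (a : EReal) :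
    (if c then -a else (⊤ : EReal)) = -(if c then a else ⊥) := by
  split <;> simp

lemma nearSet_closed {B : ℝ} {ζ₁ : ℝ → X} {J₁ : Set ℝ} {ζ₂ : ℝ → X} {J₂ : Set ℝ}
    (h1 : GeodesicOn ζ₁ J₁) (hc : IsClosed J₁) :
    IsClosed (nearSet B ζ₁ J₁ ζ₂ J₂) := by
  apply IsSeqClosed.isClosed
  intro u p hu hup
  have hpJ : p ∈ J₁ := hc.mem_of_tendsto hup (Filter.Eventually.of_forall fun n => (hu n).1)
  refine ⟨hpJ, ?_⟩
  have hb : ∀ n, Metric.infDist (ζ₁ p) (ζ₂ '' J₂) ≤ 6 * B + 2 + dist p (u n) := by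
    intro n
    calc Metric.infDist (ζ₁ p) (ζ₂ '' J₂)
        ≤ Metric.infDist (ζ₁ (u n)) (ζ₂ '' J₂) + dist (ζ₁ p) (ζ₁ (u n)) :=
          Metric.infDist_le_infDist_add_dist
      _ ≤ 6 * B + 2 + dist p (u n) := by
          rw [h1 p hpJ (u n) (hu n).1, ← Real.dist_eq]
          exact add_le_add (hu n).2 le_rfl
  have ht : Filter.Tendsto (fun n => 6 * B + 2 + dist p (u n)) Filter.atTop
      (nhds (6 * B + 2 + dist p p)) :=
    tendsto_const_nhds.add (tendsto_const_nhds.dist hup)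
  rw [dist_self] at ht
  have := ge_of_tendsto ht (Filter.Eventually.of_forall hb)
  linarith

lemma dist_proj_le {γ : ℝ → X} {J : Set ℝ} (hγ : GeodesicOn γ J) (hc : IsClosed J)
    (ho : J.OrdConnected) (hne : J.Nonempty) {x y : X} {z : ℝ} (hz : z ∈ J)
    (hbetween : |projParam γ J x - z| ≤ |projParam γ J x - projParam γ J y|) :
    dist (γ (projParam γ J x)) (γ z) ≤ dist x y := by
  rw [hγ _ (projParam_spec hγ hc ho hne x).1 z hz]
  exact hbetween.trans (projParam_lipschitz hγ hc ho hne x y)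

lemma ite_ofReal_eq_top {c : Prop} [Decidable c] {r r' : ℝ}
    (h : (if c then ENNReal.ofReal r else ⊤) = ⊤) :
    (if c then ENNReal.ofReal r' else ⊤) = ⊤ := by
  by_cases hc : c
  · rw [if_pos hc] at h; exact absurd h ENNReal.ofReal_ne_top
  · rw [if_neg hc]

lemma ite_ofReal_le {c : Prop} [Decidable c] {r r' d : ℝ} (hd : 0 ≤ d)
    (h : c → r ≤ r' + d) :
    (if c then ENNReal.ofReal r else ⊤) ≤
      (if c then ENNReal.ofReal r' else ⊤) + ENNReal.ofReal d := by
  by_cases hc : c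
  · rw [if_pos hc, if_pos hc]
    exact le_trans (ENNReal.ofReal_le_ofReal (h hc)) ENNReal.ofReal_add_le
  · rw [if_neg hc, if_neg hc]
    exact le_self_add

end TauBAux

/-- Lemma `taubfirst`. For two oriented geodesics in a proper CAT(0)-space
sharing at most one endpoint at infinity, the function `τ_B` is symmetric, invariant under
simultaneously reversing both orientations, and `1`-Lipschitz in the basepoint. -/
theorem tauB_symm_reverse_lipschitz
    {X : Type} [MetricSpace X] [ProperSpace X] [CAT0Space X] (o : X)
    (B : ℝ) (hB : 0 < B) (ζ₁ ζ₂ : ℝ → X) (J₁ J₂ : Set ℝ)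
    (h1 : GeodesicOn ζ₁ J₁) (h2 : GeodesicOn ζ₂ J₂)
    (hJ₁c : IsClosed J₁) (hJ₁o : J₁.OrdConnected)
    (hJ₂c : IsClosed J₂) (hJ₂o : J₂.OrdConnected)
    (hshare : ShareAtMostOneEnd o ζ₁ ζ₂) :
    (∀ x : X, tauB B x ζ₁ J₁ ζ₂ J₂ = tauB B x ζ₂ J₂ ζ₁ J₁) ∧
    (∀ x : X, tauB B x (fun t => ζ₁ (-t)) ((fun t : ℝ => -t) '' J₁)
        (fun t => ζ₂ (-t)) ((fun t : ℝ => -t) '' J₂) = tauB B x ζ₁ J₁ ζ₂ J₂) ∧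
    (∀ x y : X, tauB B x ζ₁ J₁ ζ₂ J₂ ≤ tauB B y ζ₁ J₁ ζ₂ J₂ + dist x y) := by
  refine ⟨fun x => ?_, fun x => ?_, fun x y => ?_⟩
  · simp only [tauB]
    exact if_congr (by tauto) (by rw [min_comm]) rfl
  · simp only [tauB, nearSet_neg, Set.nonempty_neg, bddBelow_neg, bddAbove_neg,
      real_sInf_neg, real_sSup_neg, neg_neg,
      projParam_neg h1 hJ₁c hJ₁o, projParam_neg h2 hJ₂c hJ₂o, EReal.coe_neg,
      ite_neg_bot, ite_neg_top, EReal.neg_lt_neg_iff, EReal.neg_le_neg_iff]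
    exact if_congr (by tauto)
      (congrArg ENNReal.toReal (congrArg₂ Min.min (min_comm _ _) (min_comm _ _))) rfl
  · -- 1-Lipschitz in the basepoint
    simp only [tauB]
    set N₁ := nearSet B ζ₁ J₁ ζ₂ J₂ with hN₁def
    set N₂ := nearSet B ζ₂ J₂ ζ₁ J₁ with hN₂def
    set px₁ := projParam ζ₁ J₁ x with hpx₁def
    set px₂ := projParam ζ₂ J₂ x with hpx₂def
    set py₁ := projParam ζ₁ J₁ y with hpy₁def
    set py₂ := projParam ζ₂ J₂ y with hpy₂def
    set s₁ : EReal := if BddBelow N₂ then ((projParam ζ₁ J₁ (ζ₂ (sInf N₂)) : ℝ) : EReal)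
      else ⊥ with hs₁def
    set t₁ : EReal := if BddAbove N₂ then ((projParam ζ₁ J₁ (ζ₂ (sSup N₂)) : ℝ) : EReal)
      else ⊤ with ht₁def
    set s₂ : EReal := if BddBelow N₁ then ((projParam ζ₂ J₂ (ζ₁ (sInf N₁)) : ℝ) : EReal)
      else ⊥ with hs₂def
    set t₂ : EReal := if BddAbove N₁ then ((projParam ζ₂ J₂ (ζ₁ (sSup N₁)) : ℝ) : EReal)
      else ⊤ with ht₂def
    set a₁ : EReal := if BddBelow N₁ then ((sInf N₁ : ℝ) : EReal) else ⊥ with ha₁def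
    set b₁ : EReal := if BddAbove N₁ then ((sSup N₁ : ℝ) : EReal) else ⊤ with hb₁def
    set a₂ : EReal := if BddBelow N₂ then ((sInf N₂ : ℝ) : EReal) else ⊥ with ha₂def
    set b₂ : EReal := if BddAbove N₂ then ((sSup N₂ : ℝ) : EReal) else ⊤ with hb₂def
    set dA₁ : ℝ≥0∞ := if BddBelow N₁ then ENNReal.ofReal (dist (ζ₁ px₁) (ζ₁ (sInf N₁)))
      else ⊤ with hdA₁def
    set dB₁ : ℝ≥0∞ := if BddAbove N₁ then ENNReal.ofReal (dist (ζ₁ px₁) (ζ₁ (sSup N₁)))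
      else ⊤ with hdB₁def
    set dA₂ : ℝ≥0∞ := if BddBelow N₂ then ENNReal.ofReal (dist (ζ₂ px₂) (ζ₂ (sInf N₂)))
      else ⊤ with hdA₂def
    set dB₂ : ℝ≥0∞ := if BddAbove N₂ then ENNReal.ofReal (dist (ζ₂ px₂) (ζ₂ (sSup N₂)))
      else ⊤ with hdB₂def
    set eA₁ : ℝ≥0∞ := if BddBelow N₁ then ENNReal.ofReal (dist (ζ₁ py₁) (ζ₁ (sInf N₁)))
      else ⊤ with heA₁def
    set eB₁ : ℝ≥0∞ := if BddAbove N₁ then ENNReal.ofReal (dist (ζ₁ py₁) (ζ₁ (sSup N₁)))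
      else ⊤ with heB₁def
    set eA₂ : ℝ≥0∞ := if BddBelow N₂ then ENNReal.ofReal (dist (ζ₂ py₂) (ζ₂ (sInf N₂)))
      else ⊤ with heA₂def
    set eB₂ : ℝ≥0∞ := if BddAbove N₂ then ENNReal.ofReal (dist (ζ₂ py₂) (ζ₂ (sSup N₂)))
      else ⊤ with heB₂def
    by_cases hx : N₁.Nonempty ∧ N₂.Nonempty ∧ s₁ < t₁ ∧ s₂ < t₂ ∧
        a₁ ≤ (px₁ : EReal) ∧ (px₁ : EReal) ≤ b₁ ∧ a₂ ≤ (px₂ : EReal) ∧ (px₂ : EReal) ≤ b₂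
    swap
    · -- condition for x fails : LHS = 0
      rw [if_neg hx]
      have h0 : (0:ℝ) ≤ (if N₁.Nonempty ∧ N₂.Nonempty ∧ s₁ < t₁ ∧ s₂ < t₂ ∧
          a₁ ≤ (py₁ : EReal) ∧ (py₁ : EReal) ≤ b₁ ∧ a₂ ≤ (py₂ : EReal) ∧ (py₂ : EReal) ≤ b₂
          then (min (min eA₁ eB₁) (min eA₂ eB₂)).toReal else 0) := by
        split
        · exact ENNReal.toReal_nonneg
        · exact le_rfl
      linarith [dist_nonneg (x := x) (y := y)]
    obtain ⟨hn₁, hn₂, hss₁, hss₂, hax₁, hbx₁, hax₂, hbx₂⟩ := hx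
    have hJ₁ne : J₁.Nonempty := ⟨hn₁.choose, hn₁.choose_spec.1⟩
    have hJ₂ne : J₂.Nonempty := ⟨hn₂.choose, hn₂.choose_spec.1⟩
    have hpx₁s := projParam_spec h1 hJ₁c hJ₁o hJ₁ne x
    have hpy₁s := projParam_spec h1 hJ₁c hJ₁o hJ₁ne y
    have hpx₂s := projParam_spec h2 hJ₂c hJ₂o hJ₂ne x
    have hpy₂s := projParam_spec h2 hJ₂c hJ₂o hJ₂ne y
    have hlip₁ : |px₁ - py₁| ≤ dist x y := projParam_lipschitz h1 hJ₁c hJ₁o hJ₁ne x y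
    have hlip₂ : |px₂ - py₂| ≤ dist x y := projParam_lipschitz h2 hJ₂c hJ₂o hJ₂ne x y
    have hN₁c : IsClosed N₁ := nearSet_closed h1 hJ₁c
    have hN₂c : IsClosed N₂ := nearSet_closed h2 hJ₂c
    rw [if_pos ⟨hn₁, hn₂, hss₁, hss₂, hax₁, hbx₁, hax₂, hbx₂⟩]
    by_cases hy : a₁ ≤ (py₁ : EReal) ∧ (py₁ : EReal) ≤ b₁ ∧
        a₂ ≤ (py₂ : EReal) ∧ (py₂ : EReal) ≤ b₂
    · -- both conditions hold
      obtain ⟨hay₁, hby₁, hay₂, hby₂⟩ := hy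
      rw [if_pos ⟨hn₁, hn₂, hss₁, hss₂, hay₁, hby₁, hay₂, hby₂⟩]
      set c : ℝ≥0∞ := ENNReal.ofReal (dist x y) with hcdef
      have k1 : dA₁ ≤ eA₁ + c := by
        rw [hdA₁def, heA₁def]
        refine ite_ofReal_le dist_nonneg fun _ => ?_
        calc dist (ζ₁ px₁) (ζ₁ (sInf N₁)) ≤
            dist (ζ₁ px₁) (ζ₁ py₁) + dist (ζ₁ py₁) (ζ₁ (sInf N₁)) := dist_triangle _ _ _
          _ ≤ dist (ζ₁ py₁) (ζ₁ (sInf N₁)) + dist x y := by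
              rw [h1 _ hpx₁s.1 _ hpy₁s.1]
              linarith [hlip₁]
      have k2 : dB₁ ≤ eB₁ + c := by
        rw [hdB₁def, heB₁def]
        refine ite_ofReal_le dist_nonneg fun _ => ?_
        calc dist (ζ₁ px₁) (ζ₁ (sSup N₁)) ≤
            dist (ζ₁ px₁) (ζ₁ py₁) + dist (ζ₁ py₁) (ζ₁ (sSup N₁)) := dist_triangle _ _ _
          _ ≤ dist (ζ₁ py₁) (ζ₁ (sSup N₁)) + dist x y := by
              rw [h1 _ hpx₁s.1 _ hpy₁s.1]
              linarith [hlip₁]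
      have k3 : dA₂ ≤ eA₂ + c := by
        rw [hdA₂def, heA₂def]
        refine ite_ofReal_le dist_nonneg fun _ => ?_
        calc dist (ζ₂ px₂) (ζ₂ (sInf N₂)) ≤
            dist (ζ₂ px₂) (ζ₂ py₂) + dist (ζ₂ py₂) (ζ₂ (sInf N₂)) := dist_triangle _ _ _
          _ ≤ dist (ζ₂ py₂) (ζ₂ (sInf N₂)) + dist x y := by
              rw [h2 _ hpx₂s.1 _ hpy₂s.1]
              linarith [hlip₂]
      have k4 : dB₂ ≤ eB₂ + c := by
        rw [hdB₂def, heB₂def]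
        refine ite_ofReal_le dist_nonneg fun _ => ?_
        calc dist (ζ₂ px₂) (ζ₂ (sSup N₂)) ≤
            dist (ζ₂ px₂) (ζ₂ py₂) + dist (ζ₂ py₂) (ζ₂ (sSup N₂)) := dist_triangle _ _ _
          _ ≤ dist (ζ₂ py₂) (ζ₂ (sSup N₂)) + dist x y := by
              rw [h2 _ hpx₂s.1 _ hpy₂s.1]
              linarith [hlip₂]
      have hMle : min (min dA₁ dB₁) (min dA₂ dB₂) ≤ min (min eA₁ eB₁) (min eA₂ eB₂) + c := by
        calc min (min dA₁ dB₁) (min dA₂ dB₂)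
            ≤ min (min (eA₁ + c) (eB₁ + c)) (min (eA₂ + c) (eB₂ + c)) :=
              min_le_min (min_le_min k1 k2) (min_le_min k3 k4)
          _ = min (min eA₁ eB₁ + c) (min eA₂ eB₂ + c) := by
              rw [min_add_add_right, min_add_add_right]
          _ = min (min eA₁ eB₁) (min eA₂ eB₂) + c := by rw [min_add_add_right]
      rcases eq_or_ne (min (min eA₁ eB₁) (min eA₂ eB₂)) ⊤ with htop | htop
      · -- everything unbounded: both sides are 0
        obtain ⟨he1, he2⟩ := min_eq_top.1 htop
        obtain ⟨heA₁, heB₁⟩ := min_eq_top.1 he1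
        obtain ⟨heA₂, heB₂⟩ := min_eq_top.1 he2
        have : min (min dA₁ dB₁) (min dA₂ dB₂) = ⊤ := by
          rw [min_eq_top, min_eq_top, min_eq_top]
          exact ⟨⟨ite_ofReal_eq_top heA₁, ite_ofReal_eq_top heB₁⟩,
            ⟨ite_ofReal_eq_top heA₂, ite_ofReal_eq_top heB₂⟩⟩
        rw [this, htop]
        simp [dist_nonneg]
      · have hne' : min (min eA₁ eB₁) (min eA₂ eB₂) + c ≠ ⊤ :=
          ENNReal.add_ne_top.2 ⟨htop, ENNReal.ofReal_ne_top⟩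
        calc (min (min dA₁ dB₁) (min dA₂ dB₂)).toReal
            ≤ (min (min eA₁ eB₁) (min eA₂ eB₂) + c).toReal :=
              ENNReal.toReal_mono hne' hMle
          _ = (min (min eA₁ eB₁) (min eA₂ eB₂)).toReal + dist x y := by
              rw [ENNReal.toReal_add htop ENNReal.ofReal_ne_top]
              simp [hcdef, ENNReal.toReal_ofReal dist_nonneg]
    · -- condition for y fails: show LHS ≤ dist x y
      rw [if_neg (fun hc => hy ⟨hc.2.2.2.2.1, hc.2.2.2.2.2.1, hc.2.2.2.2.2.2.1,
        hc.2.2.2.2.2.2.2⟩), zero_add]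
      -- helper to conclude from a bound on one of the four terms
      have conclude : ∀ m : ℝ≥0∞, m ≠ ⊤ → min (min dA₁ dB₁) (min dA₂ dB₂) ≤ m →
          m.toReal ≤ dist x y → (min (min dA₁ dB₁) (min dA₂ dB₂)).toReal ≤ dist x y :=
        fun m hm hle hd => le_trans (ENNReal.toReal_mono hm hle) hd
      by_cases k1 : a₁ ≤ (py₁ : EReal)
      · by_cases k2 : (py₁ : EReal) ≤ b₁
        · by_cases k3 : a₂ ≤ (py₂ : EReal)
          · by_cases k4 : (py₂ : EReal) ≤ b₂
            · exact absurd ⟨k1, k2, k3, k4⟩ hy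
            · -- py₂ > sSup N₂ ≥ px₂
              have hbdd : BddAbove N₂ := by
                by_contra hb
                exact k4 (by rw [hb₂def, if_neg hb]; exact le_top)
              rw [hb₂def, if_pos hbdd] at k4 hbx₂
              have hlt : sSup N₂ < py₂ := EReal.coe_lt_coe_iff.1 (not_le.1 k4)
              have hle : px₂ ≤ sSup N₂ := EReal.coe_le_coe_iff.1 hbx₂
              have hzJ : sSup N₂ ∈ J₂ := (hN₂c.csSup_mem hn₂ hbdd).1
              have hd : dist (ζ₂ px₂) (ζ₂ (sSup N₂)) ≤ dist x y := by
                apply dist_proj_le h2 hJ₂c hJ₂o hJ₂ne hzJ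
                rw [abs_of_nonpos (by linarith), abs_of_nonpos (by linarith)]
                linarith
              apply conclude _ ENNReal.ofReal_ne_top
              · refine le_trans (min_le_right _ _) (le_trans (min_le_right _ _) ?_)
                rw [hdB₂def, if_pos hbdd]
              · rw [ENNReal.toReal_ofReal dist_nonneg]
                exact hd
          · -- py₂ < sInf N₂ ≤ px₂
            have hbdd : BddBelow N₂ := by
              by_contra hb
              exact k3 (by rw [ha₂def, if_neg hb]; exact bot_le)
            rw [ha₂def, if_pos hbdd] at k3 hax₂
            have hlt : py₂ < sInf N₂ := EReal.coe_lt_coe_iff.1 (not_le.1 k3)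
            have hle : sInf N₂ ≤ px₂ := EReal.coe_le_coe_iff.1 hax₂
            have hzJ : sInf N₂ ∈ J₂ := (hN₂c.csInf_mem hn₂ hbdd).1
            have hd : dist (ζ₂ px₂) (ζ₂ (sInf N₂)) ≤ dist x y := by
              apply dist_proj_le h2 hJ₂c hJ₂o hJ₂ne hzJ
              rw [abs_of_nonneg (by linarith), abs_of_nonneg (by linarith)]
              linarith
            apply conclude _ ENNReal.ofReal_ne_top
            · refine le_trans (min_le_right _ _) (le_trans (min_le_left _ _) ?_)
              rw [hdA₂def, if_pos hbdd]
            · rw [ENNReal.toReal_ofReal dist_nonneg]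
              exact hd
        · -- py₁ > sSup N₁ ≥ px₁
          have hbdd : BddAbove N₁ := by
            by_contra hb
            exact k2 (by rw [hb₁def, if_neg hb]; exact le_top)
          rw [hb₁def, if_pos hbdd] at k2 hbx₁
          have hlt : sSup N₁ < py₁ := EReal.coe_lt_coe_iff.1 (not_le.1 k2)
          have hle : px₁ ≤ sSup N₁ := EReal.coe_le_coe_iff.1 hbx₁
          have hzJ : sSup N₁ ∈ J₁ := (hN₁c.csSup_mem hn₁ hbdd).1
          have hd : dist (ζ₁ px₁) (ζ₁ (sSup N₁)) ≤ dist x y := by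
            apply dist_proj_le h1 hJ₁c hJ₁o hJ₁ne hzJ
            rw [abs_of_nonpos (by linarith), abs_of_nonpos (by linarith)]
            linarith
          apply conclude _ ENNReal.ofReal_ne_top
          · refine le_trans (min_le_left _ _) (le_trans (min_le_right _ _) ?_)
            rw [hdB₁def, if_pos hbdd]
          · rw [ENNReal.toReal_ofReal dist_nonneg]
            exact hd
      · -- py₁ < sInf N₁ ≤ px₁
        have hbdd : BddBelow N₁ := by
          by_contra hb
          exact k1 (by rw [ha₁def, if_neg hb]; exact bot_le)
        rw [ha₁def, if_pos hbdd] at k1 hax₁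
        have hlt : py₁ < sInf N₁ := EReal.coe_lt_coe_iff.1 (not_le.1 k1)
        have hle : sInf N₁ ≤ px₁ := EReal.coe_le_coe_iff.1 hax₁
        have hzJ : sInf N₁ ∈ J₁ := (hN₁c.csInf_mem hn₁ hbdd).1
        have hd : dist (ζ₁ px₁) (ζ₁ (sInf N₁)) ≤ dist x y := by
          apply dist_proj_le h1 hJ₁c hJ₁o hJ₁ne hzJ
          rw [abs_of_nonneg (by linarith), abs_of_nonneg (by linarith)]
          linarith
        apply conclude _ ENNReal.ofReal_ne_top
        · refine le_trans (min_le_left _ _) (le_trans (min_le_left _ _) ?_)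
          rw [hdA₁def, if_pos hbdd]
        · rw [ENNReal.toReal_ofReal dist_nonneg]
          exact hd


end
end
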